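/- arXiv:2504.17363 — 4 statements merged into one kernel-verified Lean document; each statement's English description precedes it below -/
import Mathlib

section
/- Let X be a random element of a metric space E such that v(T) P(T^{-1} X ∈ ·) → μ(·) in M(E \ F) as T → ∞, where v is regularly varying with index α > 0 and F is a closed cone. Then the limit measure μ is (−α)-homogeneous: μ(uA) = u^{-α} μ(A) for every u > 0 and every Borel set A ⊂ E \ F bounded away from F. -/
open MeasureTheory Filter Set Topology
open scoped ENNReal NNReal

/-- Convergence in `M(E \ F)`: integrals of bounded continuous functions vanishing on a
neighborhood `F^r` of `F` converge. -/
def MConvergesTo {E : Type*} [MetricSpace E] [MeasurableSpace E]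
    (ν : ℝ → Measure E) (μ : Measure E) (F : Set E) : Prop :=
  ∀ f : E → ℝ, Continuous f → (∃ C, ∀ x, |f x| ≤ C) →
    (∃ r > 0, ∀ x ∈ Metric.thickening r F, f x = 0) →
    Tendsto (fun T => ∫ x, f x ∂(ν T)) atTop (𝓝 (∫ x, f x ∂μ))

/-- The limit measure of a regularly varying random element with index `α > 0` is
`(−α)`-homogeneous: `μ(uA) = u^{-α} μ(A)` for all `u > 0` and Borel `A` bounded away
from the cone `F`. -/
theorem limit_measure_homogeneous
    {E : Type*} [MetricSpace E] [CompleteSpace E] [TopologicalSpace.SeparableSpace E]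
    [MeasurableSpace E] [BorelSpace E]
    {Ω : Type*} [MeasurableSpace Ω] (P : Measure Ω) [IsProbabilityMeasure P]
    (scale : ℝ → E → E)
    (hscale_one : ∀ y, scale 1 y = y)
    (hscale_mul : ∀ a b : ℝ, 0 < a → 0 < b → ∀ y, scale a (scale b y) = scale (a * b) y)
    (hscale_cont : ∀ a : ℝ, 0 < a → Continuous (scale a))
    (F : Set E) (hF : IsClosed F)
    (hcone : ∀ u : ℝ, 0 < u → scale u '' F = F)
    (hcone_exp : ∀ u : ℝ, 1 < u → ∀ y ∉ F,
      Metric.infDist y F < Metric.infDist (scale u y) F)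
    (X : Ω → E) (hX : Measurable X)
    (v : ℝ → ℝ) (hvpos : ∀ T, 0 < v T) (α : ℝ) (hα : 0 < α)
    (hv : ∀ δ > 0, Tendsto (fun T => v (δ * T) / v T) atTop (𝓝 (δ ^ α)))
    (μ : Measure E) (hμne : μ ≠ 0)
    (hμfin : ∀ r > 0, μ (Metric.thickening r F)ᶜ ≠ ⊤)
    (hconv : MConvergesTo
      (fun T => ENNReal.ofReal (v T) • Measure.map (fun ω => scale T⁻¹ (X ω)) P) μ F) :
    ∀ u : ℝ, 0 < u → ∀ A : Set E, MeasurableSet A →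
      (∃ r > 0, Disjoint A (Metric.thickening r F)) →
      μ (scale u '' A) = ENNReal.ofReal (u ^ (-α)) * μ A := by
  -- dispose of the degenerate case `F = ∅`
  rcases F.eq_empty_or_nonempty with hFe | hFne
  · intro u hu A hA hAaway
    rcases isEmpty_or_nonempty E with hE | hE
    · have hA' : A = ∅ := Set.eq_empty_of_isEmpty A
      have him : scale u '' A = ∅ := Set.eq_empty_of_isEmpty _
      rw [him, hA', measure_empty, mul_zero]
    · obtain ⟨y⟩ := hE
      have := hcone_exp 2 one_lt_two y (by simp [hFe])
      simp [hFe, Metric.infDist_empty] at this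
  -- the contraction `scale w⁻¹` (for `w > 1`) does not increase the distance to `F`
  have hcontract : ∀ w : ℝ, 1 < w → ∀ x : E,
      Metric.infDist (scale w⁻¹ x) F ≤ Metric.infDist x F := by
    intro w hw x
    have hw0 : (0:ℝ) < w := lt_trans one_pos hw
    by_cases hx : scale w⁻¹ x ∈ F
    · rw [Metric.infDist_zero_of_mem hx]; exact Metric.infDist_nonneg
    · have h := hcone_exp w hw _ hx
      rw [hscale_mul w w⁻¹ hw0 (inv_pos.2 hw0), mul_inv_cancel₀ hw0.ne', hscale_one] at h
      exact h.le
  -- scaling images are preimages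
  have himg : ∀ w : ℝ, 0 < w → ∀ S : Set E, scale w '' S = (scale w⁻¹) ⁻¹' S := by
    intro w hw S
    ext x
    constructor
    · rintro ⟨a, ha, rfl⟩
      have : scale w⁻¹ (scale w a) = a := by
        rw [hscale_mul w⁻¹ w (inv_pos.2 hw) hw, inv_mul_cancel₀ hw.ne', hscale_one]
      simpa [Set.mem_preimage, this] using ha
    · intro hx
      exact ⟨scale w⁻¹ x, hx, by
        rw [hscale_mul w w⁻¹ hw (inv_pos.2 hw), mul_inv_cancel₀ hw.ne', hscale_one]⟩
  -- key integral identity for `w > 1`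
  have keyInt : ∀ w : ℝ, 1 < w → ∀ f : E → ℝ, Continuous f → (∃ C, ∀ x, |f x| ≤ C) →
      (∃ ρ > 0, ∀ x ∈ Metric.thickening ρ F, f x = 0) →
      ∫ x, f (scale w⁻¹ x) ∂μ = w ^ (-α) * ∫ x, f x ∂μ := by
    intro w hw f hfc hfb hf0
    have hw0 : (0:ℝ) < w := lt_trans one_pos hw
    set g : E → ℝ := fun x => f (scale w⁻¹ x) with hg
    have hgc : Continuous g := hfc.comp (hscale_cont _ (inv_pos.2 hw0))
    have hgb : ∃ C, ∀ x, |g x| ≤ C := hfb.imp (fun C hC x => hC _)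
    have hg0 : ∃ ρ > 0, ∀ x ∈ Metric.thickening ρ F, g x = 0 := by
      obtain ⟨ρ, hρ, h0⟩ := hf0
      refine ⟨ρ, hρ, fun x hx => h0 _ ?_⟩
      rw [Metric.mem_thickening_iff_infDist_lt hFne] at hx ⊢
      exact lt_of_le_of_lt (hcontract w hw x) hx
    have h1 := hconv f hfc hfb hf0
    have h2 := hconv g hgc hgb hg0
    have h3 : Tendsto (fun T => ∫ x, f x ∂(ENNReal.ofReal (v (w * T)) •
        Measure.map (fun ω => scale (w * T)⁻¹ (X ω)) P)) atTop (𝓝 (∫ x, f x ∂μ)) :=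
      h1.comp (tendsto_id.const_mul_atTop hw0)
    have h4 : Tendsto (fun T => (v (w * T) / v T) * ∫ x, g x ∂(ENNReal.ofReal (v T) •
        Measure.map (fun ω => scale T⁻¹ (X ω)) P)) atTop (𝓝 (w ^ α * ∫ x, g x ∂μ)) :=
      (hv w hw0).mul h2
    have heq : ∀ᶠ T in atTop, ∫ x, f x ∂(ENNReal.ofReal (v (w * T)) •
        Measure.map (fun ω => scale (w * T)⁻¹ (X ω)) P)
        = (v (w * T) / v T) * ∫ x, g x ∂(ENNReal.ofReal (v T) •
            Measure.map (fun ω => scale T⁻¹ (X ω)) P) := by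
      filter_upwards [eventually_gt_atTop (0:ℝ)] with T hT
      have hwT : (0:ℝ) < w * T := mul_pos hw0 hT
      have hφ1 : AEMeasurable (fun ω => scale (w * T)⁻¹ (X ω)) P :=
        ((hscale_cont _ (inv_pos.2 hwT)).measurable.comp hX).aemeasurable
      have hφ2 : AEMeasurable (fun ω => scale T⁻¹ (X ω)) P :=
        ((hscale_cont _ (inv_pos.2 hT)).measurable.comp hX).aemeasurable
      rw [integral_smul_measure, integral_smul_measure,
        integral_map hφ1 hfc.aestronglyMeasurable,
        integral_map hφ2 hgc.aestronglyMeasurable,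
        ENNReal.toReal_ofReal (hvpos (w * T)).le, ENNReal.toReal_ofReal (hvpos T).le]
      have hpt : ∀ ω, f (scale (w * T)⁻¹ (X ω)) = g (scale T⁻¹ (X ω)) := by
        intro ω
        rw [hg]
        simp only
        rw [hscale_mul w⁻¹ T⁻¹ (inv_pos.2 hw0) (inv_pos.2 hT), ← mul_inv]
      simp_rw [hpt]
      rw [smul_eq_mul, smul_eq_mul, ← mul_assoc, div_mul_cancel₀ _ (hvpos T).ne']
    have h3' : Tendsto (fun T => (v (w * T) / v T) * ∫ x, g x ∂(ENNReal.ofReal (v T) •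
        Measure.map (fun ω => scale T⁻¹ (X ω)) P)) atTop (𝓝 (∫ x, f x ∂μ)) :=
      h3.congr' heq
    have hEq : ∫ x, f x ∂μ = w ^ α * ∫ x, g x ∂μ := tendsto_nhds_unique h3' h4
    have hwα : (0:ℝ) < w ^ α := Real.rpow_pos_of_pos hw0 α
    rw [hEq, Real.rpow_neg hw0.le]
    exact (inv_mul_cancel_left₀ hwα.ne' _).symm
  -- key measure identity for `w > 1`
  have keyMeas : ∀ w : ℝ, 1 < w → ∀ B : Set E, MeasurableSet B →
      (∃ r > 0, Disjoint B (Metric.thickening r F)) →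
      μ ((scale w⁻¹) ⁻¹' B) = ENNReal.ofReal (w ^ (-α)) * μ B := by
    intro w hw B hB hBaway
    obtain ⟨r, hr, hdisj⟩ := hBaway
    have hw0 : (0:ℝ) < w := lt_trans one_pos hw
    have hmeas_inv : Measurable (scale w⁻¹) := (hscale_cont _ (inv_pos.2 hw0)).measurable
    set μ₁ : Measure E := Measure.map (scale w⁻¹) μ with hμ₁
    have hμ₁app : ∀ S : Set E, MeasurableSet S → μ₁ S = μ ((scale w⁻¹) ⁻¹' S) :=
      fun S hS => Measure.map_apply hmeas_inv hS
    have hμ₁fin : ∀ s > 0, μ₁ (Metric.thickening s F)ᶜ ≠ ⊤ := by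
      intro s hs
      rw [hμ₁app _ (Metric.isOpen_thickening.measurableSet.compl)]
      refine ne_top_of_le_ne_top (hμfin s hs) (measure_mono ?_)
      intro x hx
      simp only [Set.mem_preimage, Set.mem_compl_iff,
        Metric.mem_thickening_iff_infDist_lt hFne, not_lt] at hx ⊢
      exact le_trans hx (hcontract w hw x)
    -- lintegral version of the key identity for nonneg test functions
    have keyLint : ∀ ρ > 0, ∀ f : E → ℝ, Continuous f → (∀ x, 0 ≤ f x) → (∀ x, f x ≤ 1) →
        (∀ x ∈ Metric.thickening ρ F, f x = 0) →
        ∫⁻ x, ENNReal.ofReal (f x) ∂μ₁ = ENNReal.ofReal (w ^ (-α)) * ∫⁻ x, ENNReal.ofReal (f x) ∂μ := by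
      intro ρ hρ f hfc hf0 hf1 hfv
      have hbound : ∀ ν : Measure E, (ν (Metric.thickening ρ F)ᶜ ≠ ⊤) →
          ∫⁻ x, ENNReal.ofReal (f x) ∂ν ≠ ⊤ := by
        intro ν hν
        refine ne_top_of_le_ne_top hν ?_
        calc ∫⁻ x, ENNReal.ofReal (f x) ∂ν
            ≤ ∫⁻ x, (Metric.thickening ρ F)ᶜ.indicator (fun _ => 1) x ∂ν := by
              refine lintegral_mono fun x => ?_
              by_cases hx : x ∈ Metric.thickening ρ F
              · simp [hfv x hx, Set.indicator_of_notMem, hx]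
              · simp only [Set.indicator_of_mem, Set.mem_compl_iff, hx, not_false_iff]
                exact ENNReal.ofReal_le_one.2 (hf1 x)
          _ = ν (Metric.thickening ρ F)ᶜ := by
              rw [lintegral_indicator Metric.isOpen_thickening.measurableSet.compl]
              simp
      have hfin1 : ∫⁻ x, ENNReal.ofReal (f x) ∂μ₁ ≠ ⊤ := hbound μ₁ (hμ₁fin ρ hρ)
      have hfin : ∫⁻ x, ENNReal.ofReal (f x) ∂μ ≠ ⊤ := hbound μ (hμfin ρ hρ)
      have hBoch := keyInt w hw f hfc
        ⟨1, fun x => abs_le.2 ⟨by linarith [hf0 x], hf1 x⟩⟩ ⟨ρ, hρ, hfv⟩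
      have hmof : Measurable fun x => ENNReal.ofReal (f x) := hfc.measurable.ennreal_ofReal
      have e1 : ∫ x, f (scale w⁻¹ x) ∂μ = (∫⁻ x, ENNReal.ofReal (f x) ∂μ₁).toReal := by
        rw [hμ₁, lintegral_map hmof hmeas_inv,
          integral_eq_lintegral_of_nonneg_ae (Filter.Eventually.of_forall fun x => hf0 _)
            (hfc.comp (hscale_cont _ (inv_pos.2 hw0))).aestronglyMeasurable]
      have e2 : ∫ x, f x ∂μ = (∫⁻ x, ENNReal.ofReal (f x) ∂μ).toReal :=
        integral_eq_lintegral_of_nonneg_ae (Filter.Eventually.of_forall fun x => hf0 x)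
          hfc.aestronglyMeasurable
      rw [e1, e2] at hBoch
      have hne2 : ENNReal.ofReal (w ^ (-α)) * ∫⁻ x, ENNReal.ofReal (f x) ∂μ ≠ ⊤ :=
        ENNReal.mul_ne_top ENNReal.ofReal_ne_top hfin
      refine (ENNReal.toReal_eq_toReal_iff' hfin1 hne2).1 ?_
      rw [ENNReal.toReal_mul, ENNReal.toReal_ofReal (Real.rpow_nonneg hw0.le _)]
      exact hBoch
    -- the two measures agree on closed sets bounded away from `F`
    have keyClosed : ∀ s > 0, ∀ C : Set E, IsClosed C → Disjoint C (Metric.thickening s F) →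
        μ₁ C = ENNReal.ofReal (w ^ (-α)) * μ C := by
      intro s hs C hC hCdisj
      have hCinf : ∀ c ∈ C, s ≤ Metric.infDist c F := by
        intro c hc
        by_contra h
        exact (Set.disjoint_left.1 hCdisj hc)
          ((Metric.mem_thickening_iff_infDist_lt hFne).2 (not_le.1 h))
      set δs : ℕ → ℝ := fun n => s / (4 * (n + 1)) with hδs
      have δpos : ∀ n, 0 < δs n := fun n => by positivity
      have δlim : Tendsto δs atTop (𝓝 0) := by
        have h := tendsto_one_div_add_atTop_nhds_zero_nat.const_mul (s / 4)
        rw [mul_zero] at h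
        refine h.congr fun n => ?_
        simp only [hδs]
        rw [mul_one_div, div_div]
      have δle : ∀ n, δs n ≤ s / 4 := by
        intro n
        rw [hδs]
        apply div_le_div_of_nonneg_left hs.le (by norm_num)
        have : (1:ℝ) ≤ n + 1 := by exact_mod_cast Nat.one_le_iff_ne_zero.2 (Nat.succ_ne_zero n)
        nlinarith
      -- the thickened indicators vanish on `thickening (s/2) F`
      have hvan : ∀ n, ∀ x ∈ Metric.thickening (s/2) F,
          ((thickenedIndicator (δpos n) C x : ℝ) : ℝ) = 0 := by
        intro n x hx
        rw [Metric.mem_thickening_iff_infDist_lt hFne] at hx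
        by_contra h
        have hmem : x ∈ Metric.thickening (δs n) C := by
          by_contra hmem
          rw [thickenedIndicator_zero (δpos n) C hmem] at h
          simp at h
        obtain ⟨c, hcC, hcd⟩ := Metric.mem_thickening_iff.1 hmem
        have h1 : Metric.infDist c F ≤ Metric.infDist x F + dist c x :=
          Metric.infDist_le_infDist_add_dist
        have h2 : s ≤ Metric.infDist c F := hCinf c hcC
        have h3 : dist c x < s / 4 := by
          rw [dist_comm]; exact lt_of_lt_of_le hcd (δle n)
        linarith
      -- test identity for the thickened indicators
      have hti : ∀ n, ∫⁻ x, (thickenedIndicator (δpos n) C x : ℝ≥0∞) ∂μ₁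
          = ENNReal.ofReal (w ^ (-α)) * ∫⁻ x, (thickenedIndicator (δpos n) C x : ℝ≥0∞) ∂μ := by
        intro n
        have hcont : Continuous fun x => ((thickenedIndicator (δpos n) C x : ℝ) : ℝ) :=
          NNReal.continuous_coe.comp (thickenedIndicator (δpos n) C).continuous
        have := keyLint (s/2) (by linarith) _ hcont
          (fun x => (thickenedIndicator (δpos n) C x).coe_nonneg)
          (fun x => by exact_mod_cast thickenedIndicator_le_one (δpos n) C x)
          (hvan n)
        simpa [ENNReal.ofReal_coe_nnreal] using this
      -- restrict to `S := (thickening (s/2) F)ᶜ` which has finite measure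
      set S : Set E := (Metric.thickening (s/2) F)ᶜ with hSdef
      have hSmeas : MeasurableSet S := Metric.isOpen_thickening.measurableSet.compl
      have hCS : C ⊆ S := by
        intro c hc
        simp only [hSdef, Set.mem_compl_iff, Metric.mem_thickening_iff_infDist_lt hFne, not_lt]
        linarith [hCinf c hc]
      haveI hfin1 : IsFiniteMeasure (μ₁.restrict S) :=
        ⟨by rw [Measure.restrict_apply_univ]; exact (hμ₁fin (s/2) (by linarith)).lt_top⟩
      haveI hfin2 : IsFiniteMeasure (μ.restrict S) :=
        ⟨by rw [Measure.restrict_apply_univ]; exact (hμfin (s/2) (by linarith)).lt_top⟩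
      have hrest : ∀ ν : Measure E, ∀ n,
          ∫⁻ x, (thickenedIndicator (δpos n) C x : ℝ≥0∞) ∂(ν.restrict S)
          = ∫⁻ x, (thickenedIndicator (δpos n) C x : ℝ≥0∞) ∂ν := by
        intro ν n
        rw [← lintegral_indicator hSmeas]
        congr 1
        funext x
        by_cases hx : x ∈ S
        · simp [hx]
        · have hx' : x ∈ Metric.thickening (s/2) F := by
            simpa [hSdef] using hx
          have := hvan n x hx'
          have hz : (thickenedIndicator (δpos n) C x : ℝ≥0) = 0 := by exact_mod_cast this
          simp [hx, hz]
      have lim1 := tendsto_lintegral_thickenedIndicator_of_isClosed (μ₁.restrict S) hC δpos δlim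
      have lim2 := tendsto_lintegral_thickenedIndicator_of_isClosed (μ.restrict S) hC δpos δlim
      have lim2' : Tendsto (fun n => ENNReal.ofReal (w ^ (-α)) *
          ∫⁻ x, (thickenedIndicator (δpos n) C x : ℝ≥0∞) ∂(μ.restrict S)) atTop
          (𝓝 (ENNReal.ofReal (w ^ (-α)) * (μ.restrict S) C)) :=
        ENNReal.Tendsto.const_mul lim2 (Or.inr ENNReal.ofReal_ne_top)
      have heq : (fun n => ∫⁻ x, (thickenedIndicator (δpos n) C x : ℝ≥0∞) ∂(μ₁.restrict S))
          = fun n => ENNReal.ofReal (w ^ (-α)) *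
              ∫⁻ x, (thickenedIndicator (δpos n) C x : ℝ≥0∞) ∂(μ.restrict S) := by
        funext n
        rw [hrest μ₁ n, hrest μ n, hti n]
      rw [heq] at lim1
      have hlim := tendsto_nhds_unique lim1 lim2'
      rwa [Measure.restrict_apply hC.measurableSet, Set.inter_eq_self_of_subset_left hCS,
        Measure.restrict_apply hC.measurableSet, Set.inter_eq_self_of_subset_left hCS] at hlim
    -- extend to all measurable sets bounded away from `F` via the π-system of closed sets
    set Sr : Set E := (Metric.thickening r F)ᶜ with hSr
    have hSrmeas : MeasurableSet Sr := Metric.isOpen_thickening.measurableSet.compl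
    have hSrclosed : IsClosed Sr := Metric.isOpen_thickening.isClosed_compl
    have hBS : B ⊆ Sr := hdisj.subset_compl_right
    haveI : IsFiniteMeasure (μ₁.restrict Sr) :=
      ⟨by rw [Measure.restrict_apply_univ]; exact (hμ₁fin r hr).lt_top⟩
    haveI : IsFiniteMeasure ((ENNReal.ofReal (w ^ (-α)) • μ).restrict Sr) := by
      refine ⟨?_⟩
      rw [Measure.restrict_apply_univ, Measure.smul_apply, smul_eq_mul]
      exact ENNReal.mul_lt_top ENNReal.ofReal_lt_top (hμfin r hr).lt_top
    have hclosed_eq : ∀ C : Set E, IsClosed C →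
        (μ₁.restrict Sr) C = ((ENNReal.ofReal (w ^ (-α)) • μ).restrict Sr) C := by
      intro C hC
      rw [Measure.restrict_apply hC.measurableSet, Measure.restrict_apply hC.measurableSet,
        Measure.smul_apply, smul_eq_mul]
      have hclosed : IsClosed (C ∩ Sr) := hC.inter hSrclosed
      have hdisj' : Disjoint (C ∩ Sr) (Metric.thickening r F) := by
        refine Set.disjoint_left.2 fun x hx hx' => ?_
        exact hx.2 hx'
      exact keyClosed r hr _ hclosed hdisj'
    have hext : μ₁.restrict Sr = (ENNReal.ofReal (w ^ (-α)) • μ).restrict Sr := by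
      refine ext_of_generate_finite {C : Set E | IsClosed C}
        (BorelSpace.measurable_eq.trans borel_eq_generateFrom_isClosed) ?_ ?_ ?_
      · rintro C hC D hD -
        exact hC.inter hD
      · intro C hC
        exact hclosed_eq C hC
      · exact hclosed_eq univ isClosed_univ
    have h1 : μ₁ B = (μ₁.restrict Sr) B := by
      rw [Measure.restrict_apply hB, Set.inter_eq_self_of_subset_left hBS]
    have h2 : ((ENNReal.ofReal (w ^ (-α)) • μ).restrict Sr) B
        = ENNReal.ofReal (w ^ (-α)) * μ B := by
      rw [Measure.restrict_apply hB, Set.inter_eq_self_of_subset_left hBS,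
        Measure.smul_apply, smul_eq_mul]
    rw [← hμ₁app B hB, h1, hext, h2]
  -- now the main statement
  intro u hu A hA hAaway
  obtain ⟨r, hr, hdisj⟩ := hAaway
  rcases lt_trichotomy u 1 with hu1 | rfl | hu1
  · -- case u < 1 : exhaust `scale u '' A` by sets bounded away from F
    set w : ℝ := u⁻¹ with hwdef
    have hw : 1 < w := one_lt_inv_iff₀.2 ⟨hu, hu1⟩
    have hw0 : (0:ℝ) < w := lt_trans one_pos hw
    have hscaleu_meas : Measurable (scale u) := (hscale_cont u hu).measurable
    have himgA : scale u '' A = (scale u⁻¹) ⁻¹' A := himg u hu A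
    have himA_meas : MeasurableSet (scale u '' A) := by
      rw [himgA]
      exact (hscale_cont u⁻¹ (inv_pos.2 hu)).measurable hA
    set B : ℕ → Set E := fun n => (scale u '' A) \ Metric.thickening (1/(n+1)) F with hBdef
    have hBmeas : ∀ n, MeasurableSet (B n) :=
      fun n => himA_meas.diff Metric.isOpen_thickening.measurableSet
    have hBmono : Monotone B := by
      intro m n hmn
      refine Set.diff_subset_diff_right (Metric.thickening_mono ?_ F)
      apply one_div_le_one_div_of_le (by positivity)
      exact_mod_cast Nat.add_le_add_right hmn 1
    have hBaway : ∀ n, Disjoint (B n) (Metric.thickening (1/(n+1)) F) :=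
      fun n => Set.disjoint_left.2 fun x hx => hx.2
    have hBunion : ⋃ n, B n = scale u '' A := by
      apply subset_antisymm (Set.iUnion_subset fun n => Set.diff_subset)
      rintro y ⟨a, ha, rfl⟩
      have hainf : r ≤ Metric.infDist a F := by
        by_contra h
        exact (Set.disjoint_left.1 hdisj ha)
          ((Metric.mem_thickening_iff_infDist_lt hFne).2 (not_le.1 h))
      have haF : a ∉ F := by
        intro h
        rw [Metric.infDist_zero_of_mem h] at hainf
        linarith
      have hyF : scale u a ∉ F := by
        intro h
        apply haF
        have : scale w (scale u a) ∈ scale w '' F := ⟨_, h, rfl⟩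
        rw [hcone w hw0] at this
        rwa [hscale_mul w u hw0 hu, hwdef, inv_mul_cancel₀ hu.ne', hscale_one] at this
      have hpos : 0 < Metric.infDist (scale u a) F :=
        (hF.notMem_iff_infDist_pos hFne).1 hyF
      obtain ⟨n, hn⟩ := exists_nat_one_div_lt hpos
      refine Set.mem_iUnion.2 ⟨n, ⟨a, ha, rfl⟩, fun hmem => ?_⟩
      rw [Metric.mem_thickening_iff_infDist_lt hFne] at hmem
      linarith
    have hwinv : w⁻¹ = u := inv_inv u
    set C : ℕ → Set E := fun n => (scale u) ⁻¹' (B n) with hCdef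
    have hCmono : Monotone C := fun m n hmn => Set.preimage_mono (hBmono hmn)
    have hCunion : ⋃ n, C n = A := by
      rw [hCdef]
      simp only
      rw [← Set.preimage_iUnion, hBunion]
      ext x
      simp only [Set.mem_preimage]
      constructor
      · rintro ⟨a, ha, he⟩
        have h2 := congrArg (scale u⁻¹) he
        rw [hscale_mul u⁻¹ u (inv_pos.2 hu) hu a, hscale_mul u⁻¹ u (inv_pos.2 hu) hu x,
          inv_mul_cancel₀ hu.ne', hscale_one, hscale_one] at h2
        rwa [← h2]
      · intro hx
        exact ⟨x, hx, rfl⟩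
    have hμim : μ (scale u '' A) = ⨆ n, μ (B n) := by
      rw [← hBunion]
      exact (hBmono.directed_le).measure_iUnion
    have hμA : μ A = ⨆ n, μ (C n) := by
      rw [← hCunion]
      exact (hCmono.directed_le).measure_iUnion
    have hCval : ∀ n, μ (C n) = ENNReal.ofReal (w ^ (-α)) * μ (B n) := by
      intro n
      have := keyMeas w hw (B n) (hBmeas n) ⟨1/(n+1), by positivity, hBaway n⟩
      rwa [hwinv] at this
    have hstep : μ A = ENNReal.ofReal (u ^ α) * μ (scale u '' A) := by
      have hwα : w ^ (-α) = u ^ α := by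
        rw [hwdef, Real.rpow_neg (inv_nonneg.2 hu.le), Real.inv_rpow hu.le, inv_inv]
      rw [hμA, hμim]
      simp_rw [hCval, hwα]
      exact (ENNReal.mul_iSup _ _).symm
    calc μ (scale u '' A) = 1 * μ (scale u '' A) := (one_mul _).symm
      _ = ENNReal.ofReal (u ^ (-α) * u ^ α) * μ (scale u '' A) := by
          rw [← Real.rpow_add hu, neg_add_cancel, Real.rpow_zero, ENNReal.ofReal_one]
      _ = ENNReal.ofReal (u ^ (-α)) * (ENNReal.ofReal (u ^ α) * μ (scale u '' A)) := by
          rw [ENNReal.ofReal_mul (Real.rpow_nonneg hu.le _), mul_assoc]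
      _ = ENNReal.ofReal (u ^ (-α)) * μ A := by rw [← hstep]
  · -- case u = 1
    have him : scale 1 '' A = A := by
      ext x
      simp only [Set.mem_image]
      constructor
      · rintro ⟨a, ha, he⟩
        rw [hscale_one] at he
        rwa [← he]
      · intro hx
        exact ⟨x, hx, hscale_one x⟩
    rw [him, Real.one_rpow, ENNReal.ofReal_one, one_mul]
  · -- case u > 1
    rw [himg u hu A]
    exact keyMeas u hu1 A hA ⟨r, hr, hdisj⟩
end

section
/- Let W, W_1, W_2, … be i.i.d. nonnegative random variables and let G be an ℕ-valued random variable independent of (W_j) with P(G = g) = (1−m)m^g for some m ∈ (0,1). Set Q := Σ_{l=1}^{G} W_l. Suppose x_T → ∞ satisfies x_T P(W > ε T^{1−δ}) → 0 as T → ∞ for all ε > 0 and some δ ∈ (0,1), and x_T = O(T^p) for some p > 0. Then x_T P(Q > ε T) → 0 as T → ∞ for every ε > 0. -/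
open MeasureTheory Filter Set Topology ProbabilityTheory
open scoped ENNReal

-- auxiliary: identical tails
lemma aux_tail_eq {Ω : Type*} [MeasurableSpace Ω] (P : Measure Ω)
    (W : ℕ → Ω → ℝ) (hW : ∀ l, Measurable (W l))
    (hWident : ∀ l, Measure.map (W l) P = Measure.map (W 0) P)
    (l : ℕ) (t : ℝ) : P {ω | t < W l ω} = P {ω | t < W 0 ω} := by
  have h1 : P {ω | t < W l ω} = (P.map (W l)) (Set.Ioi t) := by
    rw [Measure.map_apply (hW l) measurableSet_Ioi]; rfl
  have h2 : P {ω | t < W 0 ω} = (P.map (W 0)) (Set.Ioi t) := by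
    rw [Measure.map_apply (hW 0) measurableSet_Ioi]; rfl
  rw [h1, h2, hWident l]

-- auxiliary: union bound for sums
lemma aux_union_bound {Ω : Type*} [MeasurableSpace Ω] (P : Measure Ω)
    (W : ℕ → Ω → ℝ) (hW : ∀ l, Measurable (W l))
    (hWident : ∀ l, Measure.map (W l) P = Measure.map (W 0) P)
    (a b : ℝ) (ha : 0 < a) (hb : 0 ≤ b) (g N : ℕ) (hg : g ≤ N)
    (hab : (N : ℝ) * b ≤ a) :
    P {ω | a < ∑ l ∈ Finset.range g, W (l + 1) ω} ≤ g * P {ω | b < W 0 ω} := by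
  have hsub : {ω | a < ∑ l ∈ Finset.range g, W (l + 1) ω}
      ⊆ ⋃ l ∈ Finset.range g, {ω | b < W (l + 1) ω} := by
    intro ω hω
    by_contra h
    simp only [Set.mem_iUnion, Finset.mem_range, Set.mem_setOf_eq, not_exists, not_lt] at h
    have hsum : ∑ l ∈ Finset.range g, W (l + 1) ω ≤ ∑ _l ∈ Finset.range g, b :=
      Finset.sum_le_sum (fun l hl => h l (Finset.mem_range.mp hl))
    have : ∑ l ∈ Finset.range g, W (l + 1) ω ≤ a := by
      refine hsum.trans ?_
      rw [Finset.sum_const, Finset.card_range, nsmul_eq_mul]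
      calc (g : ℝ) * b ≤ (N : ℝ) * b := by
            apply mul_le_mul_of_nonneg_right _ hb
            exact_mod_cast hg
        _ ≤ a := hab
    exact absurd hω (not_lt.mpr this)
  calc P {ω | a < ∑ l ∈ Finset.range g, W (l + 1) ω}
      ≤ ∑ l ∈ Finset.range g, P {ω | b < W (l + 1) ω} :=
        (measure_mono hsub).trans (measure_biUnion_finset_le _ _)
    _ = ∑ _l ∈ Finset.range g, P {ω | b < W 0 ω} :=
        Finset.sum_congr rfl (fun l _ => aux_tail_eq P W hW hWident (l + 1) b)
    _ = g * P {ω | b < W 0 ω} := by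
        rw [Finset.sum_const, Finset.card_range, nsmul_eq_mul]

set_option maxHeartbeats 1000000 in
lemma aux_main_bound {Ω : Type*} [MeasurableSpace Ω] (P : Measure Ω) [IsProbabilityMeasure P]
    (W : ℕ → Ω → ℝ) (hW : ∀ l, Measurable (W l))
    (hWident : ∀ l, Measure.map (W l) P = Measure.map (W 0) P)
    (m : ℝ) (hm : m ∈ Set.Ioo (0:ℝ) 1)
    (G : Ω → ℕ) (hG : Measurable G)
    (hGgeom : ∀ g : ℕ, P {ω | G ω = g} = ENNReal.ofReal ((1 - m) * m ^ g))
    (hGindep : IndepFun G (fun ω => fun l => W l ω) P)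
    (a b : ℝ) (ha : 0 < a) (hb : 0 ≤ b) (N : ℕ) (hab : (N : ℝ) * b ≤ a) :
    P {ω | a < ∑ l ∈ Finset.range (G ω), W (l + 1) ω}
      ≤ ENNReal.ofReal (m / (1 - m)) * P {ω | b < W 0 ω} + ENNReal.ofReal (m ^ (N + 1)) := by
  have hm1 : (0:ℝ) ≤ 1 - m := by linarith [hm.2]
  have hne : (1 - m) ≠ 0 := by have := hm.2; intro h; rw [sub_eq_zero] at h; linarith
  set S : ℕ → Ω → ℝ := fun g ω => ∑ l ∈ Finset.range g, W (l + 1) ω with hS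
  -- step 1: decompose over values of G
  have hsub : {ω | a < ∑ l ∈ Finset.range (G ω), W (l + 1) ω}
      ⊆ ⋃ g : ℕ, ({ω | G ω = g} ∩ {ω | a < S g ω}) := by
    intro ω hω
    exact Set.mem_iUnion.mpr ⟨G ω, rfl, hω⟩
  have hstep1 : P {ω | a < ∑ l ∈ Finset.range (G ω), W (l + 1) ω}
      ≤ ∑' g : ℕ, P ({ω | G ω = g} ∩ {ω | a < S g ω}) :=
    (measure_mono hsub).trans (measure_iUnion_le _)
  -- step 2: independence factorization
  have hfact : ∀ g : ℕ, P ({ω | G ω = g} ∩ {ω | a < S g ω})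
      = ENNReal.ofReal ((1 - m) * m ^ g) * P {ω | a < S g ω} := by
    intro g
    have hBg : MeasurableSet {w : ℕ → ℝ | a < ∑ l ∈ Finset.range g, w (l + 1)} :=
      measurableSet_lt measurable_const
        (Finset.measurable_sum _ (fun l _ => measurable_pi_apply (l+1)))
    have := hGindep.measure_inter_preimage_eq_mul _ _ (measurableSet_singleton g) hBg
    have heq : ({ω | G ω = g} ∩ {ω | a < S g ω})
        = G ⁻¹' {g} ∩ (fun ω => fun l => W l ω) ⁻¹' {w : ℕ → ℝ | a < ∑ l ∈ Finset.range g, w (l + 1)} := rfl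
    rw [heq, this, ← hGgeom g]
    rfl
  -- split the tsum at N+1
  have hsplit : ∑' g : ℕ, P ({ω | G ω = g} ∩ {ω | a < S g ω})
      = (∑ g ∈ Finset.range (N + 1), P ({ω | G ω = g} ∩ {ω | a < S g ω}))
        + ∑' g : ℕ, P ({ω | G ω = g + (N + 1)} ∩ {ω | a < S (g + (N + 1)) ω}) := by
    set f : ℕ → ℝ≥0∞ := fun g => P ({ω | G ω = g} ∩ {ω | a < S g ω}) with hf
    have hpt : ∀ g, f g = (if g < N + 1 then f g else 0) + (if g < N + 1 then 0 else f g) := by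
      intro g; split <;> simp
    rw [tsum_congr hpt, ENNReal.tsum_add]
    congr 1
    · rw [tsum_eq_sum (s := Finset.range (N + 1))
        (fun b hb => if_neg (fun h => hb (Finset.mem_range.mpr h)))]
      exact Finset.sum_congr rfl (fun b hb => if_pos (Finset.mem_range.mp hb))
    · have hinj : Function.Injective (fun i : ℕ => i + (N + 1)) :=
        fun i j h => by simpa using h
      have hsupp : Function.support (fun g => if g < N + 1 then 0 else f g)
          ⊆ Set.range (fun i : ℕ => i + (N + 1)) := by
        intro y hy
        by_cases hyN : y < N + 1
        · exact absurd (if_pos hyN) hy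
        · exact ⟨y - (N + 1), Nat.sub_add_cancel (by omega)⟩
      have hre := Function.Injective.tsum_eq hinj hsupp
      rw [← hre]
      exact tsum_congr (fun i => if_neg (by omega))
  -- head bound
  have hhead : (∑ g ∈ Finset.range (N + 1), P ({ω | G ω = g} ∩ {ω | a < S g ω}))
      ≤ ENNReal.ofReal (m / (1 - m)) * P {ω | b < W 0 ω} := by
    have h1 : ∀ g ∈ Finset.range (N + 1), P ({ω | G ω = g} ∩ {ω | a < S g ω})
        ≤ ENNReal.ofReal ((1 - m) * m ^ g * g) * P {ω | b < W 0 ω} := by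
      intro g hg
      rw [hfact g]
      have hub := aux_union_bound P W hW hWident a b ha hb g N
        (Nat.lt_succ_iff.mp (Finset.mem_range.mp hg)) hab
      calc ENNReal.ofReal ((1 - m) * m ^ g) * P {ω | a < S g ω}
          ≤ ENNReal.ofReal ((1 - m) * m ^ g) * ((g : ℝ≥0∞) * P {ω | b < W 0 ω}) :=
            mul_le_mul_right hub _
        _ = ENNReal.ofReal ((1 - m) * m ^ g * g) * P {ω | b < W 0 ω} := by
            rw [ENNReal.ofReal_mul (mul_nonneg hm1 (pow_nonneg hm.1.le g)),
              ENNReal.ofReal_natCast, mul_assoc]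
    calc (∑ g ∈ Finset.range (N + 1), P ({ω | G ω = g} ∩ {ω | a < S g ω}))
        ≤ ∑ g ∈ Finset.range (N + 1), ENNReal.ofReal ((1 - m) * m ^ g * g) * P {ω | b < W 0 ω} :=
          Finset.sum_le_sum h1
      _ = (∑ g ∈ Finset.range (N + 1), ENNReal.ofReal ((1 - m) * m ^ g * g)) * P {ω | b < W 0 ω} := by
          rw [Finset.sum_mul]
      _ ≤ ENNReal.ofReal (m / (1 - m)) * P {ω | b < W 0 ω} := by
          apply mul_le_mul_left
          rw [← ENNReal.ofReal_sum_of_nonneg (fun g _ => mul_nonneg (mul_nonneg hm1 (pow_nonneg hm.1.le g)) (Nat.cast_nonneg g))]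
          apply ENNReal.ofReal_le_ofReal
          have hsummable : Summable (fun g : ℕ => (g : ℝ) * m ^ g) :=
            ⟨_, hasSum_coe_mul_geometric_of_norm_lt_one (by rw [Real.norm_eq_abs, abs_of_pos hm.1]; exact hm.2)⟩
          have htsum : ∑' g : ℕ, (g : ℝ) * m ^ g = m / (1 - m) ^ 2 :=
            tsum_coe_mul_geometric_of_norm_lt_one (by rw [Real.norm_eq_abs, abs_of_pos hm.1]; exact hm.2)
          have hle : ∑ g ∈ Finset.range (N + 1), (g : ℝ) * m ^ g ≤ m / (1 - m) ^ 2 := by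
            rw [← htsum]
            exact Summable.sum_le_tsum _ (fun g _ => mul_nonneg (Nat.cast_nonneg g) (pow_nonneg hm.1.le g)) hsummable
          calc ∑ g ∈ Finset.range (N + 1), (1 - m) * m ^ g * g
              = (1 - m) * ∑ g ∈ Finset.range (N + 1), (g : ℝ) * m ^ g := by
                rw [Finset.mul_sum]; apply Finset.sum_congr rfl; intro g _; ring
            _ ≤ (1 - m) * (m / (1 - m) ^ 2) :=
                mul_le_mul_of_nonneg_left hle (by linarith [hm.2])
            _ = m / (1 - m) := by
                field_simp
  -- tail bound
  have htail : (∑' g : ℕ, P ({ω | G ω = g + (N + 1)} ∩ {ω | a < S (g + (N + 1)) ω}))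
      ≤ ENNReal.ofReal (m ^ (N + 1)) := by
    have h1 : ∀ g : ℕ, P ({ω | G ω = g + (N + 1)} ∩ {ω | a < S (g + (N + 1)) ω})
        ≤ ENNReal.ofReal ((1 - m) * m ^ (N + 1) * m ^ g) := by
      intro g
      rw [hfact (g + (N + 1))]
      calc ENNReal.ofReal ((1 - m) * m ^ (g + (N + 1))) * P {ω | a < S (g + (N + 1)) ω}
          ≤ ENNReal.ofReal ((1 - m) * m ^ (g + (N + 1))) * 1 :=
            mul_le_mul_right prob_le_one _
        _ = ENNReal.ofReal ((1 - m) * m ^ (N + 1) * m ^ g) := by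
            rw [mul_one]
            congr 1
            rw [pow_add]
            ring
    calc (∑' g : ℕ, P ({ω | G ω = g + (N + 1)} ∩ {ω | a < S (g + (N + 1)) ω}))
        ≤ ∑' g : ℕ, ENNReal.ofReal ((1 - m) * m ^ (N + 1) * m ^ g) := ENNReal.tsum_le_tsum h1
      _ = ENNReal.ofReal (∑' g : ℕ, (1 - m) * m ^ (N + 1) * m ^ g) := by
          rw [ENNReal.ofReal_tsum_of_nonneg (fun g => mul_nonneg (mul_nonneg hm1 (pow_nonneg hm.1.le _)) (pow_nonneg hm.1.le g))]
          exact (Summable.mul_left _ (summable_geometric_of_lt_one hm.1.le hm.2))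
      _ = ENNReal.ofReal (m ^ (N + 1)) := by
          congr 1
          rw [tsum_mul_left, tsum_geometric_of_lt_one hm.1.le hm.2]
          field_simp
    -- done
  refine hstep1.trans ?_
  rw [hsplit]
  exact add_le_add hhead htail

set_option maxHeartbeats 1000000 in
/-- Tail negligibility of cluster arrival times at geometric generation depth:
if `Q = Σ_{l=1}^{G} W_l` with `W_l` i.i.d. nonnegative, `G` geometric with parameter
`1−m` independent of the `W_l`, `x_T → ∞` grows at most polynomially and
`x_T P(W > ε T^{1−δ}) → 0` for all `ε > 0` and some `δ ∈ (0,1)`, then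
`x_T P(Q > ε T) → 0` as `T → ∞` for every `ε > 0`. -/
theorem cluster_depth_waiting_time_negligible
    {Ω : Type*} [MeasurableSpace Ω] (P : Measure Ω) [IsProbabilityMeasure P]
    (W : ℕ → Ω → ℝ) (hW : ∀ l, Measurable (W l)) (hWnonneg : ∀ l ω, 0 ≤ W l ω)
    (hWiid : iIndepFun W P)
    (hWident : ∀ l, Measure.map (W l) P = Measure.map (W 0) P)
    (m : ℝ) (hm : m ∈ Set.Ioo (0:ℝ) 1)
    (G : Ω → ℕ) (hG : Measurable G)
    (hGgeom : ∀ g : ℕ, P {ω | G ω = g} = ENNReal.ofReal ((1 - m) * m ^ g))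
    (hGindep : IndepFun G (fun ω => fun l => W l ω) P)
    (Q : Ω → ℝ) (hQ : Q = fun ω => ∑ l ∈ Finset.range (G ω), W (l + 1) ω)
    (x : ℝ → ℝ) (hxpos : ∀ T, 0 < x T) (hxinf : Tendsto x atTop atTop)
    (δ : ℝ) (hδ : δ ∈ Set.Ioo (0:ℝ) 1)
    (hxW : ∀ ε > 0, Tendsto
      (fun T => x T * (P {ω | ε * T ^ (1 - δ) < W 0 ω}).toReal) atTop (𝓝 0))
    (p : ℝ) (hp : 0 < p) (hxpoly : (fun T => x T) =O[atTop] (fun T : ℝ => T ^ p)) :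
    ∀ ε > 0, Tendsto (fun T => x T * (P {ω | ε * T < Q ω}).toReal) atTop (𝓝 0) := by
  intro ε hε
  obtain ⟨hδ0, hδ1⟩ := hδ
  obtain ⟨hm0, hm1⟩ := hm
  set C : ℝ := m / (1 - m) with hC
  have hC0 : 0 ≤ C := div_nonneg hm0.le (by linarith)
  -- key eventual bound
  have key : ∀ᶠ T in atTop, x T * (P {ω | ε * T < Q ω}).toReal
      ≤ C * (x T * (P {ω | (ε / 2) * T ^ (1 - δ) < W 0 ω}).toReal)
        + x T * m ^ (⌈T ^ δ⌉₊ + 1) := by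
    filter_upwards [eventually_ge_atTop (1:ℝ)] with T hT1
    have hTpos : (0:ℝ) < T := lt_of_lt_of_le one_pos hT1
    have hTd1 : (1:ℝ) ≤ T ^ δ := Real.one_le_rpow hT1 hδ0.le
    set N := ⌈T ^ δ⌉₊ with hN
    set b := (ε / 2) * T ^ (1 - δ) with hb
    have hbpos : 0 < b := by
      apply mul_pos (by linarith)
      exact Real.rpow_pos_of_pos hTpos _
    have hNle : (N : ℝ) ≤ 2 * T ^ δ := by
      calc (N : ℝ) ≤ T ^ δ + 1 := (Nat.ceil_lt_add_one (le_trans zero_le_one hTd1)).le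
        _ ≤ 2 * T ^ δ := by linarith
    have hab : (N : ℝ) * b ≤ ε * T := by
      calc (N : ℝ) * b ≤ (2 * T ^ δ) * b := mul_le_mul_of_nonneg_right hNle hbpos.le
        _ = ε * (T ^ δ * T ^ (1 - δ)) := by rw [hb]; ring
        _ = ε * T := by
            rw [← Real.rpow_add hTpos]
            norm_num
    have hmain := aux_main_bound P W hW hWident m ⟨hm0, hm1⟩ G hG hGgeom hGindep
      (ε * T) b (mul_pos hε hTpos) hbpos.le N hab
    have hfin : ENNReal.ofReal C * P {ω | b < W 0 ω} + ENNReal.ofReal (m ^ (N + 1)) ≠ ∞ :=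
      ENNReal.add_ne_top.mpr ⟨ENNReal.mul_ne_top ENNReal.ofReal_ne_top (measure_ne_top _ _),
        ENNReal.ofReal_ne_top⟩
    have h2 := ENNReal.toReal_mono hfin hmain
    rw [ENNReal.toReal_add (ENNReal.mul_ne_top ENNReal.ofReal_ne_top (measure_ne_top _ _))
        ENNReal.ofReal_ne_top, ENNReal.toReal_mul, ENNReal.toReal_ofReal hC0,
        ENNReal.toReal_ofReal (pow_nonneg hm0.le _)] at h2
    have hQ' : {ω | ε * T < Q ω} = {ω | ε * T < ∑ l ∈ Finset.range (G ω), W (l + 1) ω} := by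
      rw [hQ]
    rw [hQ']
    calc x T * (P {ω | ε * T < ∑ l ∈ Finset.range (G ω), W (l + 1) ω}).toReal
        ≤ x T * (C * (P {ω | b < W 0 ω}).toReal + m ^ (N + 1)) :=
          mul_le_mul_of_nonneg_left h2 (hxpos T).le
      _ = C * (x T * (P {ω | b < W 0 ω}).toReal) + x T * m ^ (N + 1) := by ring
  -- the two limit pieces
  have lim1 : Tendsto (fun T => C * (x T * (P {ω | (ε / 2) * T ^ (1 - δ) < W 0 ω}).toReal))
      atTop (𝓝 0) := by
    have := (hxW (ε / 2) (by linarith)).const_mul C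
    simpa using this
  have lim2 : Tendsto (fun T => x T * m ^ (⌈T ^ δ⌉₊ + 1)) atTop (𝓝 0) := by
    obtain ⟨K, hK⟩ := hxpoly.bound
    have hlog : (0:ℝ) < -Real.log m := neg_pos.mpr (Real.log_neg hm0 hm1)
    have hbase : Tendsto (fun u : ℝ => u ^ (p / δ) * Real.exp (-(-Real.log m) * u))
        atTop (𝓝 0) := tendsto_rpow_mul_exp_neg_mul_atTop_nhds_zero (p / δ) (-Real.log m) hlog
    have hcomp : Tendsto (fun T : ℝ => (T ^ δ) ^ (p / δ) * Real.exp (-(-Real.log m) * T ^ δ))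
        atTop (𝓝 0) := hbase.comp (tendsto_rpow_atTop hδ0)
    have hg : Tendsto (fun T : ℝ => K * ((T ^ δ) ^ (p / δ) * Real.exp (-(-Real.log m) * T ^ δ)))
        atTop (𝓝 0) := by simpa using hcomp.const_mul K
    apply squeeze_zero' (g := fun T : ℝ => K * ((T ^ δ) ^ (p / δ) * Real.exp (-(-Real.log m) * T ^ δ))) ?_ ?_ hg
    · exact Eventually.of_forall (fun T => mul_nonneg (hxpos T).le (pow_nonneg hm0.le _))
    · filter_upwards [hK, eventually_ge_atTop (1:ℝ)] with T hKT hT1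
      have hTpos : (0:ℝ) < T := lt_of_lt_of_le one_pos hT1
      have hx_le : x T ≤ K * T ^ p := by
        have h1 : ‖x T‖ = x T := Real.norm_of_nonneg (hxpos T).le
        have h2 : ‖(T : ℝ) ^ p‖ = T ^ p := Real.norm_of_nonneg (Real.rpow_nonneg hTpos.le p)
        rw [h1, h2] at hKT
        exact hKT
      have hm_le : m ^ (⌈T ^ δ⌉₊ + 1) ≤ m ^ (T ^ δ) := by
        have h1 : (m : ℝ) ^ (⌈T ^ δ⌉₊ + 1) = m ^ ((⌈T ^ δ⌉₊ + 1 : ℕ) : ℝ) :=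
          (Real.rpow_natCast m _).symm
        rw [h1]
        apply Real.rpow_le_rpow_of_exponent_ge hm0 hm1.le
        calc T ^ δ ≤ (⌈T ^ δ⌉₊ : ℝ) := Nat.le_ceil _
          _ ≤ ((⌈T ^ δ⌉₊ + 1 : ℕ) : ℝ) := by push_cast; linarith
      have heq : (K * T ^ p) * m ^ (T ^ δ)
          = K * ((T ^ δ) ^ (p / δ) * Real.exp (-(-Real.log m) * T ^ δ)) := by
        have e1 : (T ^ δ) ^ (p / δ) = T ^ p := by
          rw [← Real.rpow_mul hTpos.le]
          congr 1
          field_simp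
        have e2 : m ^ (T ^ δ) = Real.exp (-(-Real.log m) * T ^ δ) := by
          rw [Real.rpow_def_of_pos hm0]
          ring_nf
        rw [e1, e2]
        ring
      calc x T * m ^ (⌈T ^ δ⌉₊ + 1)
          ≤ (K * T ^ p) * m ^ (T ^ δ) := by
            apply mul_le_mul hx_le hm_le (pow_nonneg hm0.le _)
            exact le_trans (hxpos T).le hx_le
        _ = _ := heq
  -- conclude by squeezing
  have hsum : Tendsto (fun T => C * (x T * (P {ω | (ε / 2) * T ^ (1 - δ) < W 0 ω}).toReal)
      + x T * m ^ (⌈T ^ δ⌉₊ + 1)) atTop (𝓝 0) := by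
    simpa using lim1.add lim2
  exact squeeze_zero'
    (Eventually.of_forall (fun T => mul_nonneg (hxpos T).le ENNReal.toReal_nonneg))
    key hsum
end

section
/- Let D = Σ_{j=0}^{K} Z_j where (Z_j)_{j≥0} are i.i.d. nonnegative with P(Z > x) ∼ c₂ P(D > x) for some c₂ ∈ [0,∞), D is regularly varying with index α > 1, K is ℕ-valued with P(K > x) ∼ c₁ P(D > x) for some c₁ ∈ [0,∞), and the pair (K, D) is jointly regularly varying with index α. Then for every p ∈ (1, α) and r > 0, limsup_{x→∞} E[(K/x)^p | D > rx] < ∞. -/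
open MeasureTheory Filter Set Topology ProbabilityTheory
open scoped ENNReal

/-- A positive function is slowly varying if `ℓ(tx)/ℓ(x) → 1` as `x → ∞` for every `t > 0`. -/
def SlowlyVarying (ℓ : ℝ → ℝ) : Prop :=
  (∀ᶠ x in atTop, 0 < ℓ x) ∧ ∀ t > 0, Tendsto (fun x => ℓ (t * x) / ℓ x) atTop (𝓝 1)

/-- Conditional moment bound for a jointly regularly varying pair `(K, D)` of index
`α > 1`, where `D = Σ_{j=0}^{K} Z_j` is a cluster sum with i.i.d. nonnegative summands
whose tails are comparable to that of `D`: for every `p ∈ (1, α)` and `r > 0`,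
`limsup_{x → ∞} E[(K/x)^p | D > rx] < ∞`. -/
theorem conditional_moment_bound_cluster_size
    {Ω : Type*} [MeasurableSpace Ω] (P : Measure Ω) [IsProbabilityMeasure P]
    (K : Ω → ℕ) (hK : Measurable K)
    (Z : ℕ → Ω → ℝ) (hZ : ∀ j, Measurable (Z j)) (hZnonneg : ∀ j ω, 0 ≤ Z j ω)
    (hZiid : iIndepFun Z P)
    (hZident : ∀ j, Measure.map (Z j) P = Measure.map (Z 0) P)
    (D : Ω → ℝ) (hD : D = fun ω => ∑ j ∈ Finset.range (K ω + 1), Z j ω)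
    -- `D` is regularly varying with index `α > 1`
    (α : ℝ) (hα : 1 < α) (ℓ : ℝ → ℝ) (hℓ : SlowlyVarying ℓ)
    (htail : ∀ x > 0, (P {ω | x < D ω}).toReal = x ^ (-α) * ℓ x)
    -- tail equivalences of `Z` and `K` with `D`
    (c₁ c₂ : ℝ) (hc₁ : 0 ≤ c₁) (hc₂ : 0 ≤ c₂)
    (hKtail : Tendsto (fun x => (P {ω | x < (K ω : ℝ)}).toReal /
      (P {ω | x < D ω}).toReal) atTop (𝓝 c₁))
    (hZtail : Tendsto (fun x => (P {ω | x < Z 0 ω}).toReal /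
      (P {ω | x < D ω}).toReal) atTop (𝓝 c₂))
    -- joint regular variation of `(K, D)` with index `α`
    (v : ℝ → ℝ) (hvpos : ∀ T, 0 < v T)
    (hv : ∀ δ > 0, Tendsto (fun T => v (δ * T) / v T) atTop (𝓝 (δ ^ α)))
    (μ : Measure (ℝ × ℝ)) (hμne : μ ≠ 0)
    (hjrv : MConvergesTo
      (fun T => ENNReal.ofReal (v T) •
        Measure.map (fun ω => (T⁻¹ * (K ω : ℝ), T⁻¹ * D ω)) P) μ
      ({((0:ℝ), (0:ℝ))} : Set (ℝ × ℝ))) :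
    ∀ p ∈ Set.Ioo (1:ℝ) α, ∀ r > (0:ℝ),
      Filter.IsBoundedUnder (· ≤ ·) atTop
        (fun x => (∫ ω in {ω | r * x < D ω}, ((K ω : ℝ) / x) ^ p ∂P) /
          (P {ω | r * x < D ω}).toReal) := by

  classical
  intro p hp r hr
  obtain ⟨hp1, hpα⟩ := hp
  have hp0 : (0:ℝ) < p := lt_trans one_pos hp1
  set p' : ℝ := (p + α) / 2 with hp'def
  have hpp' : p < p' := by simp only [hp'def]; linarith
  have hp'α : p' < α := by simp only [hp'def]; linarith
  have hp'0 : (0:ℝ) < p' := by linarith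
  have hKcast : Measurable fun ω => (K ω : ℝ) := measurable_from_top.comp hK
  have hHfin : ∀ u : ℝ, P {ω | u < D ω} ≠ ⊤ := fun u => measure_ne_top P _
  -- positivity of the tail of D, eventually
  have E1 : ∀ᶠ u in atTop, 0 < (P {ω | u < D ω}).toReal := by
    filter_upwards [hℓ.1, eventually_gt_atTop (0:ℝ)] with u hl hu
    rw [htail u hu]
    positivity
  -- doubling bound for the tail of D, eventually
  have E2 : ∀ᶠ u in atTop,
      P {ω | 2*u < D ω} ≤ ENNReal.ofReal (2 ^ (-p')) * P {ω | u < D ω} := by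
    have h2 : (1:ℝ) < 2 ^ (α - p') :=
      Real.one_lt_rpow_iff_of_pos two_pos |>.2 (Or.inl ⟨one_lt_two, by linarith⟩)
    filter_upwards [(hℓ.2 2 two_pos).eventually_lt_const h2, hℓ.1,
      eventually_gt_atTop (0:ℝ)] with u hratio hl hu
    have h2u : (0:ℝ) < 2*u := by linarith
    have hl2 : ℓ (2*u) ≤ 2 ^ (α - p') * ℓ u := ((div_lt_iff₀ hl).1 hratio).le
    have hid : (2:ℝ)^(-α) * 2^(α - p') = 2^(-p') := by
      rw [← Real.rpow_add two_pos]; congr 1; ring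
    have key : (P {ω | 2*u < D ω}).toReal ≤ 2 ^ (-p') * (P {ω | u < D ω}).toReal := by
      rw [htail _ h2u, htail _ hu]
      rw [Real.mul_rpow (by norm_num : (0:ℝ) ≤ 2) hu.le]
      calc (2:ℝ)^(-α) * u^(-α) * ℓ (2*u)
          ≤ 2^(-α) * u^(-α) * (2^(α-p') * ℓ u) := by
            apply mul_le_mul_of_nonneg_left hl2
            positivity
        _ = (2^(-α) * 2^(α-p')) * (u^(-α) * ℓ u) := by ring
        _ = 2^(-p') * (u^(-α) * ℓ u) := by rw [hid]
    have := ENNReal.ofReal_le_ofReal key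
    rwa [ENNReal.ofReal_toReal (hHfin _), ENNReal.ofReal_mul (by positivity),
      ENNReal.ofReal_toReal (hHfin _)] at this
  -- tail comparison of K with D, eventually
  have E3 : ∀ᶠ u in atTop,
      P {ω | u < (K ω:ℝ)} ≤ ENNReal.ofReal (c₁+1) * P {ω | u < D ω} := by
    filter_upwards [hKtail.eventually_lt_const (lt_add_one c₁), E1] with u hrat hpos
    have key : (P {ω | u < (K ω:ℝ)}).toReal ≤ (c₁+1) * (P {ω | u < D ω}).toReal :=
      ((div_lt_iff₀ hpos).1 hrat).le
    have := ENNReal.ofReal_le_ofReal key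
    rwa [ENNReal.ofReal_toReal (measure_ne_top P _), ENNReal.ofReal_mul (by linarith),
      ENNReal.ofReal_toReal (hHfin _)] at this
  -- comparing tails at x and r*x, eventually
  have hrx : Tendsto (fun x : ℝ => r * x) atTop atTop :=
    Tendsto.const_mul_atTop hr tendsto_id
  have hcomp : Tendsto (fun x => ℓ x / ℓ (r * x)) atTop (𝓝 1) := by
    have h1 := (hℓ.2 r⁻¹ (inv_pos.2 hr)).comp hrx
    simpa [Function.comp_def, inv_mul_cancel_left₀ hr.ne'] using h1
  have hrα : (0:ℝ) < r ^ (-α) := Real.rpow_pos_of_pos hr _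
  have E4 : ∀ᶠ x in atTop,
      P {ω | x < D ω} ≤ ENNReal.ofReal (r ^ α + 1) * P {ω | r * x < D ω} := by
    filter_upwards [hcomp.eventually_lt_const (by linarith : (1:ℝ) < 1 + r^(-α)),
      hrx.eventually hℓ.1, eventually_gt_atTop (0:ℝ)] with x h1 h2 h3
    have hℓx : ℓ x ≤ (1 + r^(-α)) * ℓ (r*x) := ((div_lt_iff₀ h2).1 h1).le
    have hrxpos : (0:ℝ) < r * x := mul_pos hr h3
    have hiden : (r^α + 1) * r^(-α) = 1 + r^(-α) := by
      have h0 : r^α * r^(-α) = 1 := by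
        rw [← Real.rpow_add hr]; simp
      calc (r^α + 1) * r^(-α) = r^α * r^(-α) + r^(-α) := by ring
        _ = 1 + r^(-α) := by rw [h0]
    have key : (P {ω | x < D ω}).toReal ≤ (r^α+1) * (P {ω | r*x < D ω}).toReal := by
      rw [htail _ h3, htail _ hrxpos, Real.mul_rpow hr.le h3.le]
      calc x^(-α) * ℓ x ≤ x^(-α) * ((1 + r^(-α)) * ℓ (r*x)) := by
            apply mul_le_mul_of_nonneg_left hℓx
            positivity
        _ = (r^α+1) * (r^(-α) * x^(-α) * ℓ (r*x)) := by rw [← hiden]; ring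
    have := ENNReal.ofReal_le_ofReal key
    rwa [ENNReal.ofReal_toReal (hHfin _), ENNReal.ofReal_mul (by positivity),
      ENNReal.ofReal_toReal (hHfin _)] at this
  have E5 : ∀ᶠ x in atTop, 0 < (P {ω | r * x < D ω}).toReal := hrx.eventually E1
  obtain ⟨X2, hX2⟩ := eventually_atTop.1 E2
  obtain ⟨X3, hX3⟩ := eventually_atTop.1 E3
  obtain ⟨X4, hX4⟩ := eventually_atTop.1 E4
  obtain ⟨X5, hX5⟩ := eventually_atTop.1 E5
  -- iterate the doubling bound
  have hiter : ∀ n : ℕ, ∀ u : ℝ, max X2 1 ≤ u →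
      P {ω | 2^n * u < D ω} ≤ ENNReal.ofReal (2^(-p'))^n * P {ω | u < D ω} := by
    intro n
    induction n with
    | zero => intro u hu; simp
    | succ n ih =>
      intro u hu
      have hu1 : (1:ℝ) ≤ u := le_trans (le_max_right _ _) hu
      have hu0 : (0:ℝ) < u := lt_of_lt_of_le one_pos hu1
      have hmono : u ≤ 2^n * u := le_mul_of_one_le_left hu0.le (one_le_pow₀ one_le_two)
      have h2nu : X2 ≤ 2^n * u := le_trans (le_trans (le_max_left _ _) hu) hmono
      have step := hX2 (2^n * u) h2nu
      have heq : {ω | 2^(n+1) * u < D ω} = {ω | 2*(2^n*u) < D ω} := by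
        have : (2:ℝ)^(n+1) * u = 2 * (2^n * u) := by ring
        rw [this]
      rw [heq]
      calc P {ω | 2*(2^n*u) < D ω}
          ≤ ENNReal.ofReal (2^(-p')) * P {ω | 2^n*u < D ω} := step
        _ ≤ ENNReal.ofReal (2^(-p')) * (ENNReal.ofReal (2^(-p'))^n * P {ω | u < D ω}) :=
            mul_le_mul_right (ih u hu) _
        _ = ENNReal.ofReal (2^(-p'))^(n+1) * P {ω | u < D ω} := by
            rw [pow_succ]; ring
  -- geometric constants
  set ρ : ℝ≥0∞ := ENNReal.ofReal (2 ^ (p - p')) with hρdef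
  have hρ1 : ρ < 1 := by
    rw [hρdef]
    exact ENNReal.ofReal_lt_one.2 (Real.rpow_lt_one_of_one_lt_of_neg one_lt_two (by linarith))
  have h1ρ : (1:ℝ≥0∞) - ρ ≠ 0 := fun h => (not_le.2 hρ1) (tsub_eq_zero_iff_le.1 h)
  set Cg : ℝ≥0∞ := ENNReal.ofReal (2^p) * (1-ρ)⁻¹ with hCgdef
  have hCg : Cg ≠ ⊤ :=
    ENNReal.mul_ne_top ENNReal.ofReal_ne_top (ENNReal.inv_ne_top.2 h1ρ)
  set Ctot : ℝ≥0∞ := 1 + ENNReal.ofReal (c₁+1) * ENNReal.ofReal (r^α+1) * Cg with hCtotdef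
  have hCtot : Ctot ≠ ⊤ := by
    rw [hCtotdef]
    exact ENNReal.add_ne_top.2 ⟨ENNReal.one_ne_top,
      ENNReal.mul_ne_top (ENNReal.mul_ne_top ENNReal.ofReal_ne_top ENNReal.ofReal_ne_top) hCg⟩
  refine ⟨Ctot.toReal, eventually_map.2 ?_⟩
  filter_upwards [eventually_ge_atTop (max X2 1), eventually_ge_atTop X3,
    eventually_ge_atTop X4, eventually_ge_atTop X5] with x hx2 hx3 hx4 hx5
  have hx1 : (1:ℝ) ≤ x := le_trans (le_max_right _ _) hx2
  have hx0 : (0:ℝ) < x := lt_of_lt_of_le one_pos hx1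
  have hx5' : 0 < (P {ω | r * x < D ω}).toReal := hX5 x hx5
  set S : Set Ω := {ω | r * x < D ω} with hSdef
  set g : Ω → ℝ := fun ω => ((K ω : ℝ) / x) ^ p with hgdef
  have hgmeas : Measurable g := (hKcast.div_const x).pow_const p
  have hgnn : ∀ ω, 0 ≤ g ω := fun ω =>
    Real.rpow_nonneg (div_nonneg (Nat.cast_nonneg _) hx0.le) p
  have hBoch : ∫ ω in S, g ω ∂P = (∫⁻ ω in S, ENNReal.ofReal (g ω) ∂P).toReal :=
    integral_eq_lintegral_of_nonneg_ae (ae_of_all _ hgnn) hgmeas.aestronglyMeasurable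
  set A : ℕ → Set Ω := fun n => {ω | 2^n * x < (K ω:ℝ)} with hAdef
  have hA : ∀ n, MeasurableSet (A n) := fun n => measurableSet_lt measurable_const hKcast
  -- pointwise bound
  have hpt : ∀ ω, ENNReal.ofReal (g ω) ≤
      1 + ∑' n:ℕ, ENNReal.ofReal (((2:ℝ)^(n+1))^p) * (A n).indicator 1 ω := by
    intro ω
    rcases le_or_gt ((K ω:ℝ)) x with h | h
    · have hle : g ω ≤ 1 :=
        Real.rpow_le_one (div_nonneg (Nat.cast_nonneg _) hx0.le)
          ((div_le_one hx0).2 h) hp0.le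
      calc ENNReal.ofReal (g ω) ≤ 1 := by
            simpa using ENNReal.ofReal_le_ofReal hle
        _ ≤ _ := le_self_add
    · have hex : ∃ n:ℕ, (K ω:ℝ) ≤ 2^n * x := by
        refine ⟨K ω, ?_⟩
        have h1 : (K ω:ℝ) ≤ 2^(K ω) := by
          exact_mod_cast (Nat.lt_two_pow_self (n := K ω)).le
        calc (K ω:ℝ) ≤ 2^(K ω) := h1
          _ ≤ 2^(K ω) * x := le_mul_of_one_le_right (by positivity) hx1
      have hm := Nat.find_spec hex
      have hm0 : Nat.find hex ≠ 0 := by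
        intro h0
        rw [h0] at hm
        simp only [pow_zero, one_mul] at hm
        exact absurd hm (not_le.2 h)
      obtain ⟨n, hn⟩ := Nat.exists_eq_succ_of_ne_zero hm0
      have hlt : 2^n * x < (K ω:ℝ) :=
        not_le.1 (Nat.find_min hex (by omega))
      have hub : g ω ≤ ((2:ℝ)^(n+1))^p := by
        apply Real.rpow_le_rpow (div_nonneg (Nat.cast_nonneg _) hx0.le) _ hp0.le
        rw [div_le_iff₀ hx0]
        rw [hn] at hm
        exact hm
      calc ENNReal.ofReal (g ω) ≤ ENNReal.ofReal (((2:ℝ)^(n+1))^p) :=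
            ENNReal.ofReal_le_ofReal hub
        _ = ENNReal.ofReal (((2:ℝ)^(n+1))^p) * (A n).indicator 1 ω := by
            rw [Set.indicator_of_mem (show ω ∈ A n from hlt), Pi.one_apply, mul_one]
        _ ≤ ∑' k:ℕ, ENNReal.ofReal (((2:ℝ)^(k+1))^p) * (A k).indicator 1 ω :=
            ENNReal.le_tsum n
        _ ≤ _ := le_add_self
  -- integrate the pointwise bound
  have hNle : ∫⁻ ω in S, ENNReal.ofReal (g ω) ∂P ≤
      P S + ∑' n:ℕ, ENNReal.ofReal (((2:ℝ)^(n+1))^p) * P (A n) := by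
    calc ∫⁻ ω in S, ENNReal.ofReal (g ω) ∂P
        ≤ ∫⁻ ω in S, (1 + ∑' n:ℕ, ENNReal.ofReal (((2:ℝ)^(n+1))^p) * (A n).indicator 1 ω) ∂P :=
          lintegral_mono hpt
      _ = (∫⁻ _ in S, (1:ℝ≥0∞) ∂P) +
          ∫⁻ ω in S, (∑' n:ℕ, ENNReal.ofReal (((2:ℝ)^(n+1))^p) * (A n).indicator 1 ω) ∂P :=
          lintegral_add_left measurable_const _
      _ ≤ P S + ∑' n:ℕ, ENNReal.ofReal (((2:ℝ)^(n+1))^p) * P (A n) := by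
          apply add_le_add
          · rw [setLIntegral_one]
          · rw [lintegral_tsum (fun n =>
              (((measurable_one.indicator (hA n)).const_mul _)).aemeasurable)]
            apply ENNReal.tsum_le_tsum
            intro n
            rw [lintegral_const_mul _ (measurable_one.indicator (hA n))]
            apply mul_le_mul_right
            rw [lintegral_indicator_one (hA n)]
            exact Measure.restrict_apply_le _ _
  -- bound the tail series
  have hGn : ∀ n:ℕ, P (A n) ≤
      ENNReal.ofReal (c₁+1) * (ENNReal.ofReal (2^(-p'))^n * P {ω | x < D ω}) := by
    intro n
    have hmono : x ≤ 2^n * x := le_mul_of_one_le_left hx0.le (one_le_pow₀ one_le_two)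
    have h3 := hX3 (2^n * x) (le_trans hx3 hmono)
    calc P (A n) ≤ ENNReal.ofReal (c₁+1) * P {ω | 2^n * x < D ω} := h3
      _ ≤ ENNReal.ofReal (c₁+1) * (ENNReal.ofReal (2^(-p'))^n * P {ω | x < D ω}) :=
        mul_le_mul_right (hiter n x hx2) _
  have hcn : ∀ n:ℕ, ENNReal.ofReal (((2:ℝ)^(n+1))^p) * ENNReal.ofReal (2^(-p'))^n =
      ENNReal.ofReal (2^p) * ρ^n := by
    intro n
    have hr1 : ((2:ℝ)^(n+1))^p = 2^p * ((2:ℝ)^p)^n := by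
      rw [pow_succ, mul_comm ((2:ℝ)^n) 2,
        Real.mul_rpow (by norm_num) (by positivity)]
      congr 1
      rw [← Real.rpow_natCast (2:ℝ) n, ← Real.rpow_natCast ((2:ℝ)^p) n,
        ← Real.rpow_mul (by norm_num), ← Real.rpow_mul (by norm_num), mul_comm]
    rw [hr1, ENNReal.ofReal_mul (by positivity),
      ENNReal.ofReal_pow (by positivity), mul_assoc, ← mul_pow,
      ← ENNReal.ofReal_mul (by positivity), ← Real.rpow_add two_pos]
    rw [hρdef]
    have hexp : p + -p' = p - p' := by ring
    rw [hexp]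
  have hsum : ∑' n:ℕ, ENNReal.ofReal (((2:ℝ)^(n+1))^p) * P (A n) ≤
      ENNReal.ofReal (c₁+1) * P {ω | x < D ω} * Cg := by
    calc ∑' n:ℕ, ENNReal.ofReal (((2:ℝ)^(n+1))^p) * P (A n)
        ≤ ∑' n:ℕ, ENNReal.ofReal (((2:ℝ)^(n+1))^p) *
            (ENNReal.ofReal (c₁+1) * (ENNReal.ofReal (2^(-p'))^n * P {ω | x < D ω})) :=
          ENNReal.tsum_le_tsum (fun n => mul_le_mul_right (hGn n) _)
      _ = ∑' n:ℕ, (ENNReal.ofReal (c₁+1) * P {ω | x < D ω}) *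
            (ENNReal.ofReal (((2:ℝ)^(n+1))^p) * ENNReal.ofReal (2^(-p'))^n) :=
          tsum_congr (fun n => by ring)
      _ = (ENNReal.ofReal (c₁+1) * P {ω | x < D ω}) *
            ∑' n:ℕ, ENNReal.ofReal (2^p) * ρ^n := by
          rw [ENNReal.tsum_mul_left]
          congr 1
          exact tsum_congr (fun n => hcn n)
      _ = ENNReal.ofReal (c₁+1) * P {ω | x < D ω} * Cg := by
          rw [ENNReal.tsum_mul_left, ENNReal.tsum_geometric, hCgdef]
  -- put everything together
  have hchain : ∫⁻ ω in S, ENNReal.ofReal (g ω) ∂P ≤ Ctot * P S := by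
    calc ∫⁻ ω in S, ENNReal.ofReal (g ω) ∂P
        ≤ P S + ∑' n:ℕ, ENNReal.ofReal (((2:ℝ)^(n+1))^p) * P (A n) := hNle
      _ ≤ P S + ENNReal.ofReal (c₁+1) * P {ω | x < D ω} * Cg := add_le_add_right hsum _
      _ ≤ P S + ENNReal.ofReal (c₁+1) * (ENNReal.ofReal (r^α+1) * P S) * Cg := by
          apply add_le_add_right
          apply mul_le_mul_left
          exact mul_le_mul_right (hX4 x hx4) _
      _ = Ctot * P S := by rw [hCtotdef]; ring
  have hfin : Ctot * P S ≠ ⊤ := ENNReal.mul_ne_top hCtot (measure_ne_top P S)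
  have hnum : (∫⁻ ω in S, ENNReal.ofReal (g ω) ∂P).toReal ≤ (Ctot * P S).toReal :=
    ENNReal.toReal_mono hfin hchain
  rw [hBoch]
  calc (∫⁻ ω in S, ENNReal.ofReal (g ω) ∂P).toReal / (P S).toReal
      ≤ (Ctot * P S).toReal / (P S).toReal := by
        exact div_le_div_of_nonneg_right hnum hx5'.le
      _ = Ctot.toReal := by
        rw [ENNReal.toReal_mul, mul_div_assoc, div_self hx5'.ne', mul_one]
end

section
/- Let x ∈ D([0,1], ℝ) be nondecreasing with finitely many jumps, all of positive size, and let x_k be the pure-jump path keeping only the k+1 largest jumps of x (at the same locations). If the total size of the discarded jumps plus the continuous variation of x is at most η, then d_{M1}(x, x_k) ≤ η. -/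
open MeasureTheory Filter Set Topology

/-- A real-valued function on `[0,1]` is càdlàg: right-continuous on `[0,1)` and with
left limits on `(0,1]`. -/
def Cadlag (f : ℝ → ℝ) : Prop :=
  (∀ t ∈ Set.Ico (0:ℝ) 1, ContinuousWithinAt f (Set.Ici t) t) ∧
  (∀ t ∈ Set.Ioc (0:ℝ) 1, Tendsto f (nhdsWithin t (Set.Iio t)) (nhds (Function.leftLim f t)))

/-- The completed graph of a càdlàg function `f` on `[0,1]`. -/
def graphM1 (f : ℝ → ℝ) : Set (ℝ × ℝ) :=
  {p | p.1 ∈ Set.Icc (0:ℝ) 1 ∧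
    p.2 ∈ Set.Icc (min (Function.leftLim f p.1) (f p.1)) (max (Function.leftLim f p.1) (f p.1))}

/-- The natural (total) order on the completed graph of `f`. -/
def graphLe (f : ℝ → ℝ) (p q : ℝ × ℝ) : Prop :=
  p.1 < q.1 ∨ (p.1 = q.1 ∧ |Function.leftLim f p.1 - p.2| ≤ |Function.leftLim f q.1 - q.2|)

/-- `(r, u)` is a parametric representation of `f`: a continuous nondecreasing map of
`[0,1]` onto the completed graph of `f`. -/
structure IsParamRep (f : ℝ → ℝ) (r u : ℝ → ℝ) : Prop where
  cont_r : ContinuousOn r (Set.Icc 0 1)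
  cont_u : ContinuousOn u (Set.Icc 0 1)
  onto : (fun s => (r s, u s)) '' (Set.Icc 0 1) = graphM1 f
  mono : ∀ s ∈ Set.Icc (0:ℝ) 1, ∀ s' ∈ Set.Icc (0:ℝ) 1, s ≤ s' →
    graphLe f (r s, u s) (r s', u s')

/-- Skorokhod's `M1` distance on `D([0,1], ℝ)`. -/
noncomputable def M1Dist (f g : ℝ → ℝ) : ℝ :=
  sInf {d | ∃ r₁ u₁ r₂ u₂, IsParamRep f r₁ u₁ ∧ IsParamRep g r₂ u₂ ∧
    d = max (⨆ s : Set.Icc (0:ℝ) 1, |r₁ s - r₂ s|) (⨆ s : Set.Icc (0:ℝ) 1, |u₁ s - u₂ s|)}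

namespace M1Helper

open Function

/-! ### Elementary facts about the proportional rescaling map -/

lemma qbound {l xv lk xkv v : ℝ} (h1 : l ≤ v) (h2 : v ≤ xv) (h3 : lk ≤ xkv)
    (h4 : xkv - lk ≤ xv - l) :
    lk ≤ lk + (xkv - lk) / (xv - l) * (v - l) ∧
      lk + (xkv - lk) / (xv - l) * (v - l) ≤ xkv ∧
      l - lk ≤ v - (lk + (xkv - lk) / (xv - l) * (v - l)) ∧
      v - (lk + (xkv - lk) / (xv - l) * (v - l)) ≤ xv - xkv := by
  by_cases hD : xv - l = 0
  · have hv : v - l = 0 := le_antisymm (by linarith) (by linarith)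
    have hDk : xkv - lk = 0 := le_antisymm (by linarith) (by linarith)
    rw [hv, mul_zero]
    refine ⟨by linarith, by linarith, by linarith, by linarith⟩
  · have hD0 : 0 < xv - l := lt_of_le_of_ne (by linarith) (Ne.symm hD)
    have hDk0 : 0 ≤ xkv - lk := by linarith
    have hr0 : 0 ≤ (xkv - lk) / (xv - l) := div_nonneg hDk0 hD0.le
    have hr1 : (xkv - lk) / (xv - l) ≤ 1 := (div_le_one hD0).2 h4
    have k1 : (xkv - lk) / (xv - l) * (v - l) ≤ (xkv - lk) / (xv - l) * (xv - l) :=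
      mul_le_mul_of_nonneg_left (by linarith) hr0
    have k2 : (xkv - lk) / (xv - l) * (xv - l) = xkv - lk := div_mul_cancel₀ _ hD
    have k3 : (xkv - lk) / (xv - l) * (v - l) ≤ 1 * (v - l) :=
      mul_le_mul_of_nonneg_right hr1 (by linarith)
    have k5 : 0 ≤ (xkv - lk) / (xv - l) * (v - l) := mul_nonneg hr0 (by linarith)
    have k6 : 1 * (v - l - (xv - l)) ≤ (xkv - lk) / (xv - l) * (v - l - (xv - l)) :=
      mul_le_mul_of_nonpos_right hr1 (by linarith)
    have k7 : (xkv - lk) / (xv - l) * (v - l - (xv - l))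
        = (xkv - lk) / (xv - l) * (v - l) - (xkv - lk) / (xv - l) * (xv - l) := by ring
    refine ⟨by linarith, by linarith, by linarith, by linarith⟩

lemma qtop {l xv lk xkv : ℝ} (h2 : l ≤ xv) (h3 : lk ≤ xkv) (h4 : xkv - lk ≤ xv - l) :
    lk + (xkv - lk) / (xv - l) * (xv - l) = xkv := by
  by_cases hD : xv - l = 0
  · have : xkv - lk = 0 := le_antisymm (by linarith) (by linarith)
    rw [hD, mul_zero]; linarith
  · rw [div_mul_cancel₀ _ hD]; ring

lemma qsurj {l xv lk xkv z : ℝ} (h2 : l ≤ xv) (h3 : lk ≤ z) (h3' : z ≤ xkv)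
    (h4 : xkv - lk ≤ xv - l) :
    ∃ v, l ≤ v ∧ v ≤ xv ∧ lk + (xkv - lk) / (xv - l) * (v - l) = z := by
  by_cases hDk : xkv - lk = 0
  · refine ⟨l, le_rfl, h2, ?_⟩
    rw [sub_self, mul_zero]
    linarith
  · have hDk' : 0 < xkv - lk := lt_of_le_of_ne (by linarith) (Ne.symm hDk)
    have hD' : 0 < xv - l := lt_of_lt_of_le hDk' h4
    refine ⟨l + (xv - l) / (xkv - lk) * (z - lk), ?_, ?_, ?_⟩
    · have : 0 ≤ (xv - l) / (xkv - lk) * (z - lk) :=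
        mul_nonneg (div_nonneg hD'.le hDk'.le) (by linarith)
      linarith
    · have k1 : (xv - l) / (xkv - lk) * (z - lk) ≤ (xv - l) / (xkv - lk) * (xkv - lk) :=
        mul_le_mul_of_nonneg_left (by linarith) (div_nonneg hD'.le hDk'.le)
      have k2 : (xv - l) / (xkv - lk) * (xkv - lk) = xv - l := div_mul_cancel₀ _ hDk
      linarith
    · field_simp
      ring

/-! ### The generalized inverse -/

noncomputable def pI (g : ℝ → ℝ) (z : ℝ) : ℝ := sInf {s | s ∈ Set.Icc (0:ℝ) 1 ∧ z ≤ g s}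

section pI

variable {g : ℝ → ℝ} {z : ℝ}

lemma pI_bdd : BddBelow {s | s ∈ Set.Icc (0:ℝ) 1 ∧ z ≤ g s} :=
  ⟨0, fun _ hs => hs.1.1⟩

lemma pI_ne (hz : z ≤ g 1) : Set.Nonempty {s | s ∈ Set.Icc (0:ℝ) 1 ∧ z ≤ g s} :=
  ⟨1, ⟨zero_le_one, le_rfl⟩, hz⟩

lemma pI_le {s : ℝ} (hs : s ∈ Set.Icc (0:ℝ) 1) (hzs : z ≤ g s) : pI g z ≤ s :=
  csInf_le pI_bdd ⟨hs, hzs⟩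

lemma pI_mem (hz : z ≤ g 1) : pI g z ∈ Set.Icc (0:ℝ) 1 :=
  ⟨le_csInf (pI_ne hz) (fun _ hs => hs.1.1), pI_le ⟨zero_le_one, le_rfl⟩ hz⟩

lemma pI_spec (hgrc : ContinuousWithinAt g (Set.Ici (pI g z)) (pI g z))
    (hz : z ≤ g 1) : z ≤ g (pI g z) := by
  by_contra hcon
  push_neg at hcon
  have h1 : g ⁻¹' Set.Iio z ∈ 𝓝[≥] (pI g z) := hgrc (Iio_mem_nhds hcon)
  obtain ⟨u, hu, hsub⟩ := mem_nhdsGE_iff_exists_Ico_subset.1 h1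
  obtain ⟨s, hsS, hsu⟩ := (csInf_lt_iff pI_bdd (pI_ne hz)).1 hu
  exact absurd hsS.2 (not_le.2 (hsub ⟨csInf_le pI_bdd hsS, hsu⟩))

lemma pI_leftLim (hg : Monotone g) (hz0 : Function.leftLim g 0 ≤ z) (hz : z ≤ g 1) :
    Function.leftLim g (pI g z) ≤ z := by
  rcases eq_or_lt_of_le (pI_mem (g := g) hz).1 with h | h
  · rw [← h]; exact hz0
  · have hev : ∀ᶠ s in 𝓝[<] (pI g z), g s ≤ z := by
      filter_upwards [Ioo_mem_nhdsLT_of_mem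
        (show pI g z ∈ Set.Ioc (0:ℝ) (pI g z) from ⟨h, le_rfl⟩)] with s hs
      by_contra hc
      push_neg at hc
      exact absurd (pI_le ⟨hs.1.le, hs.2.le.trans (pI_mem hz).2⟩ hc.le) (not_le.2 hs.2)
    exact le_of_tendsto (hg.tendsto_leftLim _) hev

lemma pI_eq (hg : Monotone g) {p : ℝ} (hp : p ∈ Set.Icc (0:ℝ) 1) (hzp : z ≤ g p)
    (hlow : ∀ s, 0 ≤ s → s < p → g s < z) : pI g z = p := by
  refine le_antisymm (pI_le hp hzp) (le_csInf (pI_ne (hzp.trans (hg hp.2))) ?_)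
  rintro s ⟨hs1, hs2⟩
  by_contra hcon
  push_neg at hcon
  exact absurd hs2 (not_le.2 (hlow s hs1.1 hcon))

end pI

/-! ### The common parametrization -/

noncomputable def rr (x : ℝ → ℝ) (w : ℝ) : ℝ := pI (fun s => s + x s) w

noncomputable def uu1 (x : ℝ → ℝ) (w : ℝ) : ℝ := w - rr x w

noncomputable def uu2 (x xk : ℝ → ℝ) (w : ℝ) : ℝ :=
  Function.leftLim xk (rr x w) +
    (xk (rr x w) - Function.leftLim xk (rr x w)) /
      (x (rr x w) - Function.leftLim x (rr x w)) * (uu1 x w - Function.leftLim x (rr x w))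

theorem m1_abstract (x xk : ℝ → ℝ) (η : ℝ)
    (hxm : Monotone x) (hkm : Monotone xk)
    (hxrc : ∀ τ : ℝ, ContinuousWithinAt x (Set.Ici τ) τ)
    (hkrc : ∀ τ : ℝ, ContinuousWithinAt xk (Set.Ici τ) τ)
    (hx0 : Function.leftLim x 0 = 0) (hk0 : Function.leftLim xk 0 = 0)
    (hll : ∀ τ ∈ Set.Icc (0:ℝ) 1, Function.leftLim xk τ ≤ Function.leftLim x τ)
    (hjump : ∀ τ ∈ Set.Icc (0:ℝ) 1,
      xk τ - Function.leftLim xk τ ≤ x τ - Function.leftLim x τ)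
    (hdist : ∀ τ ∈ Set.Icc (0:ℝ) 1, x τ - xk τ ≤ η) (hη0 : 0 ≤ η) :
    M1Dist x xk ≤ η := by
  classical
  set L : ℝ := 1 + x 1 with hLdef
  -- basic positivity facts
  have hllx_le : ∀ p : ℝ, Function.leftLim x p ≤ x p := fun p => hxm.leftLim_le le_rfl
  have hllk_le : ∀ p : ℝ, Function.leftLim xk p ≤ xk p := fun p => hkm.leftLim_le le_rfl
  have hx00 : (0:ℝ) ≤ x 0 := by have := hllx_le 0; rw [hx0] at this; exact this
  have hk00 : (0:ℝ) ≤ xk 0 := by have := hllk_le 0; rw [hk0] at this; exact this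
  have hx1 : (0:ℝ) ≤ x 1 := hx00.trans (hxm zero_le_one)
  have hk1 : (0:ℝ) ≤ xk 1 := hk00.trans (hkm zero_le_one)
  have hLpos : (0:ℝ) < L := by rw [hLdef]; linarith
  have hgm : Monotone (fun s : ℝ => s + x s) := fun s s' h => add_le_add h (hxm h)
  have hg1 : (fun s : ℝ => s + x s) 1 = L := rfl
  have hllx_nonneg : ∀ p ∈ Set.Icc (0:ℝ) 1, 0 ≤ Function.leftLim x p := by
    intro p hp
    rcases eq_or_lt_of_le hp.1 with h | h
    · rw [← h, hx0]
    · exact hx00.trans (hxm.le_leftLim h)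
  have hllk_nonneg : ∀ p ∈ Set.Icc (0:ℝ) 1, 0 ≤ Function.leftLim xk p := by
    intro p hp
    rcases eq_or_lt_of_le hp.1 with h | h
    · rw [← h, hk0]
    · exact hk00.trans (hkm.le_leftLim h)
  -- the generalized inverse r of s ↦ s + x s
  have hrmem : ∀ w : ℝ, 0 ≤ w → w ≤ L → rr x w ∈ Set.Icc (0:ℝ) 1 :=
    fun w _ hw => pI_mem (show w ≤ 1 + x 1 from hw)
  have hkey2 : ∀ w : ℝ, 0 ≤ w → w ≤ L → w - rr x w ≤ x (rr x w) := by
    intro w h0 hw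
    have h := pI_spec (g := fun s => s + x s) (z := w)
      (continuousWithinAt_id.add (hxrc _)) (show w ≤ 1 + x 1 from hw)
    change w ≤ rr x w + x (rr x w) at h
    linarith
  have hglx : ∀ p : ℝ, Function.leftLim (fun s : ℝ => s + x s) p
      = p + Function.leftLim x p := by
    intro p
    refine leftLim_eq_of_tendsto ?_
    exact Tendsto.add (tendsto_id.mono_left nhdsWithin_le_nhds) (hxm.tendsto_leftLim p)
  have hkey1 : ∀ w : ℝ, 0 ≤ w → w ≤ L → Function.leftLim x (rr x w) ≤ w - rr x w := by
    intro w h0 hw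
    have h := pI_leftLim (g := fun s => s + x s) hgm
      (by rw [hglx 0, hx0]; simpa using h0) (show w ≤ 1 + x 1 from hw)
    rw [hglx] at h
    change rr x w + Function.leftLim x (rr x w) ≤ w at h
    linarith
  have hreq : ∀ p ∈ Set.Icc (0:ℝ) 1, ∀ v, Function.leftLim x p ≤ v → v ≤ x p →
      rr x (p + v) = p ∧ 0 ≤ p + v ∧ p + v ≤ L := by
    intro p hp v h1 h2
    have hv0 : 0 ≤ v := (hllx_nonneg p hp).trans h1
    have hb1 : 0 ≤ p + v := by linarith [hp.1]
    have hb2 : p + v ≤ L := by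
      have := hxm hp.2
      rw [hLdef]
      linarith [hp.2]
    refine ⟨pI_eq hgm hp (show p + v ≤ p + x p by linarith) ?_, hb1, hb2⟩
    intro s hs0 hsp
    have : x s ≤ Function.leftLim x p := hxm.le_leftLim hsp
    show s + x s < p + v
    linarith
  have hrmono : ∀ w w' : ℝ, w ≤ w' → w' ≤ L → rr x w ≤ rr x w' := by
    intro w w' h1 h2
    refine le_csInf (pI_ne (show w' ≤ 1 + x 1 from h2)) ?_
    rintro s ⟨hs1, hs2⟩
    exact pI_le hs1 (le_trans h1 hs2)
  have hrlip : ∀ w w' : ℝ, w ≤ w' → w' ≤ L → rr x w' ≤ rr x w + (w' - w) := by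
    intro w w' h1 h2
    have key : ∀ s ∈ {s | s ∈ Set.Icc (0:ℝ) 1 ∧ w ≤ s + x s}, rr x w' - (w' - w) ≤ s := by
      rintro s ⟨hs1, hs2⟩
      have hr : rr x w' ≤ s + (w' - w) := by
        rcases le_total (s + (w' - w)) 1 with h | h
        · refine pI_le ⟨by linarith [hs1.1], h⟩ ?_
          have := hxm (show s ≤ s + (w' - w) by linarith)
          show w' ≤ s + (w' - w) + x (s + (w' - w))
          linarith
        · exact le_trans (pI_mem (show w' ≤ 1 + x 1 from h2)).2 h
      linarith
    have := le_csInf (pI_ne (show w ≤ 1 + x 1 by linarith)) key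
    have h3 : rr x w' - (w' - w) ≤ rr x w := this
    linarith
  have hu1mono : ∀ w w' : ℝ, w ≤ w' → w' ≤ L → uu1 x w ≤ uu1 x w' := by
    intro w w' h1 h2
    have := hrlip w w' h1 h2
    simp only [uu1]
    linarith
  -- bounds on the second parametrization
  have hq : ∀ w : ℝ, 0 ≤ w → w ≤ L →
      Function.leftLim xk (rr x w) ≤ uu2 x xk w ∧ uu2 x xk w ≤ xk (rr x w) ∧
        0 ≤ uu1 x w - uu2 x xk w ∧ uu1 x w - uu2 x xk w ≤ η := by
    intro w h0 hw
    have hp := hrmem w h0 hw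
    have h1 : Function.leftLim x (rr x w) ≤ uu1 x w := hkey1 w h0 hw
    have h2 : uu1 x w ≤ x (rr x w) := hkey2 w h0 hw
    obtain ⟨i1, i2, i3, i4⟩ := qbound h1 h2 (hllk_le _) (hjump _ hp)
    simp only [uu2]
    exact ⟨i1, i2, by linarith [hll _ hp], by linarith [hdist _ hp]⟩
  have hu2mono : ∀ w w' : ℝ, 0 ≤ w → w ≤ w' → w' ≤ L → uu2 x xk w ≤ uu2 x xk w' := by
    intro w w' h0 h1 h2
    rcases lt_or_eq_of_le (hrmono w w' h1 h2) with h | h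
    · calc uu2 x xk w ≤ xk (rr x w) := (hq w h0 (le_trans h1 h2)).2.1
        _ ≤ Function.leftLim xk (rr x w') := hkm.le_leftLim h
        _ ≤ uu2 x xk w' := (hq w' (le_trans h0 h1) h2).1
    · have hC : 0 ≤ (xk (rr x w) - Function.leftLim xk (rr x w)) /
          (x (rr x w) - Function.leftLim x (rr x w)) :=
        div_nonneg (by linarith [hllk_le (rr x w)]) (by linarith [hllx_le (rr x w)])
      have hu1 : uu1 x w ≤ uu1 x w' := hu1mono w w' h1 h2
      simp only [uu2]
      rw [← h]
      exact add_le_add_right (mul_le_mul_of_nonneg_left (by linarith) hC) _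
  -- endpoint values
  have hr0 : rr x 0 = 0 := by
    refine pI_eq hgm ⟨le_rfl, zero_le_one⟩ (by simpa using hx00) ?_
    intro s hs0 hs
    exact absurd hs (not_lt.2 hs0)
  have hrL : rr x L = 1 := by
    refine pI_eq hgm ⟨zero_le_one, le_rfl⟩ (le_of_eq hg1.symm) ?_
    intro s hs0 hs
    have := hxm hs.le
    show s + x s < L
    rw [hLdef]
    linarith
  have hu20 : uu2 x xk 0 = 0 := by
    simp [uu2, uu1, hr0, hx0, hk0]
  have hu2L : uu2 x xk L = xk 1 := by
    have hv : uu1 x L = x 1 := by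
      simp only [uu1]
      rw [hrL, hLdef]
      ring
    simp only [uu2, hrL, hv]
    exact qtop (hllx_le 1) (hllk_le 1) (hjump 1 ⟨zero_le_one, le_rfl⟩)
  -- surjectivity of uu2 onto [0, xk 1]
  have hu2surj : ∀ z : ℝ, 0 ≤ z → z ≤ xk 1 → ∃ w, 0 ≤ w ∧ w ≤ L ∧ uu2 x xk w = z := by
    intro z h0 h1
    have hp : pI xk z ∈ Set.Icc (0:ℝ) 1 := pI_mem h1
    have hzp : z ≤ xk (pI xk z) := pI_spec (hkrc _) h1
    have hlz : Function.leftLim xk (pI xk z) ≤ z := pI_leftLim hkm (by rw [hk0]; exact h0) h1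
    obtain ⟨v, hv1, hv2, hv3⟩ := qsurj (hllx_le (pI xk z)) hlz hzp (hjump _ hp)
    obtain ⟨hre, hb1, hb2⟩ := hreq _ hp v hv1 hv2
    refine ⟨pI xk z + v, hb1, hb2, ?_⟩
    simp only [uu2, uu1, hre, add_sub_cancel_left]
    exact hv3
  -- continuity of uu2 via the monotone-surjective extension
  have hu2mem : ∀ w : ℝ, 0 ≤ w → w ≤ L → 0 ≤ uu2 x xk w ∧ uu2 x xk w ≤ xk 1 := by
    intro w h0 hw
    have h := hq w h0 hw
    constructor
    · exact (hllk_nonneg _ (hrmem w h0 hw)).trans h.1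
    · exact h.2.1.trans (hkm (hrmem w h0 hw).2)
  set v2 : ℝ → ℝ := fun w => uu2 x xk (min L (max 0 w)) + min w 0 + max (w - L) 0 with hv2def
  have hclamp_mem : ∀ w : ℝ, min L (max 0 w) ∈ Set.Icc (0:ℝ) L :=
    fun w => ⟨le_min hLpos.le (le_max_left _ _), min_le_left _ _⟩
  have hv2eq : Set.EqOn (uu2 x xk) v2 (Set.Icc 0 L) := by
    intro w hw
    simp only [hv2def]
    rw [max_eq_right hw.1, min_eq_right hw.2, min_eq_right hw.1,
      max_eq_right (by linarith [hw.2] : w - L ≤ 0)]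
    ring
  have hv2mono : Monotone v2 := by
    intro b b' hbb
    simp only [hv2def]
    have hcm : min L (max 0 b) ≤ min L (max 0 b') :=
      min_le_min le_rfl (max_le_max le_rfl hbb)
    have h2 := hu2mono _ _ (hclamp_mem b).1 hcm (hclamp_mem b').2
    have h3 : min b 0 ≤ min b' 0 := min_le_min hbb le_rfl
    have h4 : max (b - L) 0 ≤ max (b' - L) 0 := max_le_max (by linarith) le_rfl
    linarith
  have hv2surj : Function.Surjective v2 := by
    intro z
    rcases lt_or_ge z 0 with h | h
    · refine ⟨z, ?_⟩
      simp only [hv2def]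
      rw [max_eq_left h.le, min_eq_right hLpos.le, hu20, min_eq_left h.le,
        max_eq_right (by linarith : z - L ≤ 0)]
      ring
    rcases le_or_gt z (xk 1) with h2 | h2
    · obtain ⟨w, hw0, hwL, hwz⟩ := hu2surj z h h2
      exact ⟨w, ((hv2eq ⟨hw0, hwL⟩).symm).trans hwz⟩
    · refine ⟨L + (z - xk 1), ?_⟩
      simp only [hv2def]
      have hpos : 0 ≤ L + (z - xk 1) := by linarith
      rw [max_eq_right hpos, min_eq_left (by linarith : L ≤ L + (z - xk 1)), hu2L,
        min_eq_right hpos, max_eq_left (by linarith : (0:ℝ) ≤ L + (z - xk 1) - L)]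
      ring
  have hu2cont : ContinuousOn (uu2 x xk) (Set.Icc 0 L) :=
    ((hv2mono.continuous_of_surjective hv2surj).continuousOn).congr hv2eq
  -- continuity of rr x
  have hrcont : ContinuousOn (rr x) (Set.Icc 0 L) := by
    apply LipschitzOnWith.continuousOn (K := 1)
    rw [lipschitzOnWith_iff_dist_le_mul]
    intro w hw w' hw'
    rw [Real.dist_eq, Real.dist_eq, NNReal.coe_one, one_mul]
    rcases le_total w w' with h | h
    · have h1 := hrmono w w' h hw'.2
      have h2 := hrlip w w' h hw'.2
      rw [abs_of_nonpos (by linarith), abs_of_nonpos (by linarith)]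
      linarith
    · have h1 := hrmono w' w h hw.2
      have h2 := hrlip w' w h hw.2
      rw [abs_of_nonneg (by linarith), abs_of_nonneg (by linarith)]
      linarith
  -- the rescaled parametrizations
  have hmapsTo : ∀ s ∈ Set.Icc (0:ℝ) 1, L * s ∈ Set.Icc (0:ℝ) L := by
    intro s hs
    constructor
    · exact mul_nonneg hLpos.le hs.1
    · calc L * s ≤ L * 1 := mul_le_mul_of_nonneg_left hs.2 hLpos.le
        _ = L := mul_one L
  have hlin : ContinuousOn (fun s : ℝ => L * s) (Set.Icc 0 1) :=
    (continuous_const.mul continuous_id).continuousOn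
  have hcontR : ContinuousOn (fun s : ℝ => rr x (L * s)) (Set.Icc 0 1) :=
    hrcont.comp hlin hmapsTo
  have hrep1 : IsParamRep x (fun s : ℝ => rr x (L * s)) (fun s : ℝ => L * s - rr x (L * s)) := by
    constructor
    · exact hcontR
    · exact hlin.sub hcontR
    · apply Set.Subset.antisymm
      · rintro q ⟨s, hs, rfl⟩
        have hw := hmapsTo s hs
        refine ⟨hrmem _ hw.1 hw.2, ?_⟩
        rw [min_eq_left (hllx_le _), max_eq_right (hllx_le _)]
        exact ⟨hkey1 _ hw.1 hw.2, hkey2 _ hw.1 hw.2⟩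
      · rintro ⟨p, y⟩ ⟨hp, hy⟩
        rw [min_eq_left (hllx_le _), max_eq_right (hllx_le _)] at hy
        obtain ⟨hre, hb1, hb2⟩ := hreq p hp y hy.1 hy.2
        refine ⟨(p + y) / L, ⟨div_nonneg hb1 hLpos.le, (div_le_one hLpos).2 hb2⟩, ?_⟩
        have hcan : L * ((p + y) / L) = p + y := mul_div_cancel₀ _ hLpos.ne'
        simp only [hcan, hre, Prod.mk.injEq]
        exact ⟨trivial, by ring⟩
    · intro s hs s' hs' hss
      have hw := hmapsTo s hs
      have hw' := hmapsTo s' hs'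
      have hww : L * s ≤ L * s' := mul_le_mul_of_nonneg_left hss hLpos.le
      rcases lt_or_eq_of_le (hrmono _ _ hww hw'.2) with h | h
      · exact Or.inl h
      · refine Or.inr ⟨h, ?_⟩
        have k1 := hkey1 _ hw.1 hw.2
        have k1' := hkey1 _ hw'.1 hw'.2
        have hlip := hrlip _ _ hww hw'.2
        show |Function.leftLim x (rr x (L * s)) - (L * s - rr x (L * s))| ≤
          |Function.leftLim x (rr x (L * s')) - (L * s' - rr x (L * s'))|
        rw [← h] at k1' ⊢
        rw [abs_of_nonpos (by linarith), abs_of_nonpos (by linarith)]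
        linarith
  have hrep2 : IsParamRep xk (fun s : ℝ => rr x (L * s)) (fun s : ℝ => uu2 x xk (L * s)) := by
    constructor
    · exact hcontR
    · exact hu2cont.comp hlin hmapsTo
    · apply Set.Subset.antisymm
      · rintro q ⟨s, hs, rfl⟩
        have hw := hmapsTo s hs
        refine ⟨hrmem _ hw.1 hw.2, ?_⟩
        rw [min_eq_left (hllk_le _), max_eq_right (hllk_le _)]
        exact ⟨(hq _ hw.1 hw.2).1, (hq _ hw.1 hw.2).2.1⟩
      · rintro ⟨p, y⟩ ⟨hp, hy⟩
        rw [min_eq_left (hllk_le _), max_eq_right (hllk_le _)] at hy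
        obtain ⟨v, hv1, hv2, hv3⟩ := qsurj (hllx_le p) hy.1 hy.2 (hjump p hp)
        obtain ⟨hre, hb1, hb2⟩ := hreq p hp v hv1 hv2
        refine ⟨(p + v) / L, ⟨div_nonneg hb1 hLpos.le, (div_le_one hLpos).2 hb2⟩, ?_⟩
        have hcan : L * ((p + v) / L) = p + v := mul_div_cancel₀ _ hLpos.ne'
        simp only [hcan, Prod.mk.injEq]
        refine ⟨hre, ?_⟩
        simp only [uu2, uu1, hre, add_sub_cancel_left]
        exact hv3
    · intro s hs s' hs' hss
      have hw := hmapsTo s hs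
      have hw' := hmapsTo s' hs'
      have hww : L * s ≤ L * s' := mul_le_mul_of_nonneg_left hss hLpos.le
      rcases lt_or_eq_of_le (hrmono _ _ hww hw'.2) with h | h
      · exact Or.inl h
      · refine Or.inr ⟨h, ?_⟩
        have k1 := (hq _ hw.1 hw.2).1
        have k1' := (hq _ hw'.1 hw'.2).1
        have hmono2 := hu2mono _ _ hw.1 hww hw'.2
        show |Function.leftLim xk (rr x (L * s)) - uu2 x xk (L * s)| ≤
          |Function.leftLim xk (rr x (L * s')) - uu2 x xk (L * s')|
        rw [← h] at k1' ⊢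
        rw [abs_of_nonpos (by linarith), abs_of_nonpos (by linarith)]
        linarith
  -- conclusion
  have hlb : ∀ d ∈ {d | ∃ r₁ u₁ r₂ u₂, IsParamRep x r₁ u₁ ∧ IsParamRep xk r₂ u₂ ∧
      d = max (⨆ s : Set.Icc (0:ℝ) 1, |r₁ s - r₂ s|)
        (⨆ s : Set.Icc (0:ℝ) 1, |u₁ s - u₂ s|)}, (0:ℝ) ≤ d := by
    rintro d ⟨r₁, u₁, r₂, u₂, _, _, rfl⟩
    exact le_trans (Real.iSup_nonneg fun s => abs_nonneg _) (le_max_left _ _)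
  have hmem : max (⨆ s : Set.Icc (0:ℝ) 1,
        |(fun s : ℝ => rr x (L * s)) s - (fun s : ℝ => rr x (L * s)) s|)
      (⨆ s : Set.Icc (0:ℝ) 1,
        |(fun s : ℝ => L * s - rr x (L * s)) s - (fun s : ℝ => uu2 x xk (L * s)) s|) ∈
      {d | ∃ r₁ u₁ r₂ u₂, IsParamRep x r₁ u₁ ∧ IsParamRep xk r₂ u₂ ∧
        d = max (⨆ s : Set.Icc (0:ℝ) 1, |r₁ s - r₂ s|)
          (⨆ s : Set.Icc (0:ℝ) 1, |u₁ s - u₂ s|)} :=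
    ⟨_, _, _, _, hrep1, hrep2, rfl⟩
  refine le_trans (csInf_le ⟨0, hlb⟩ hmem) (max_le ?_ ?_)
  · refine Real.iSup_le (fun s => ?_) hη0
    simp [hη0]
  · refine Real.iSup_le (fun s => ?_) hη0
    have hw := hmapsTo s s.2
    have h := hq (L * s) hw.1 hw.2
    have heq : (fun s : ℝ => L * s - rr x (L * s)) (s : ℝ) = uu1 x (L * s) := rfl
    simp only
    rw [show (L * (s:ℝ) - rr x (L * s)) = uu1 x (L * s) from rfl]
    rw [abs_of_nonneg h.2.2.1]
    exact h.2.2.2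

end M1Helper

/-- For a nondecreasing càdlàg path `x = c + Σᵢ aᵢ 1{tᵢ ≤ ·}` with finitely many, all
positive, jumps (`c` continuous nondecreasing, `c 0 = 0`), and `x_k` the pure-jump path
keeping only the `k+1` largest jumps (a set `J` of indices of cardinality `min (k+1) n`
containing the largest jump sizes), if the total mass of the discarded jumps plus the
continuous variation `c 1 − c 0` is at most `η`, then `d_{M1}(x, x_k) ≤ η`. -/
theorem m1Dist_keep_largest_jumps
    (n k : ℕ) (t : Fin n → ℝ) (ht : ∀ i, t i ∈ Set.Icc (0:ℝ) 1)
    (a : Fin n → ℝ) (ha : ∀ i, 0 < a i)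
    (c : ℝ → ℝ) (hc_cont : Continuous c) (hc_mono : Monotone c) (hc0 : c 0 = 0)
    (x xk : ℝ → ℝ)
    (hx : x = fun s => c s + ∑ i : Fin n, if t i ≤ s then a i else 0)
    (J : Finset (Fin n)) (hJcard : J.card = min (k + 1) n)
    (hJtop : ∀ i ∈ J, ∀ j ∉ J, a j ≤ a i)
    (hxk : xk = fun s => ∑ i ∈ J, if t i ≤ s then a i else 0)
    (η : ℝ)
    (hη : (∑ i ∈ Jᶜ, a i) + (c 1 - c 0) ≤ η) :
    M1Dist x xk ≤ η := by
  classical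
  have haz : ∀ i, (0:ℝ) ≤ a i := fun i => (ha i).le
  -- monotonicity of the jump sums
  have hsum_mono : ∀ S : Finset (Fin n),
      Monotone (fun s : ℝ => ∑ i ∈ S, if t i ≤ s then a i else 0) := by
    intro S s s' hss
    apply Finset.sum_le_sum
    intro i _
    by_cases h : t i ≤ s
    · rw [if_pos h, if_pos (h.trans hss)]
    · rw [if_neg h]
      split_ifs
      exacts [haz i, le_rfl]
  -- right continuity of the jump sums
  have hsum_rc : ∀ (S : Finset (Fin n)) (τ : ℝ),
      ContinuousWithinAt (fun s : ℝ => ∑ i ∈ S, if t i ≤ s then a i else 0)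
        (Set.Ici τ) τ := by
    intro S τ
    have hev : (fun s : ℝ => ∑ i ∈ S, if t i ≤ s then a i else 0) =ᶠ[𝓝[≥] τ]
        (fun _ => ∑ i ∈ S, if t i ≤ τ then a i else 0) := by
      refine ((eventually_all_finset S).2 fun i _ => ?_).mono
        fun s hs => Finset.sum_congr rfl hs
      by_cases hi : t i ≤ τ
      · filter_upwards [self_mem_nhdsWithin] with s hs
        rw [if_pos (hi.trans hs), if_pos hi]
      · filter_upwards [Ico_mem_nhdsGE
          (show τ < t i from not_le.1 hi)] with s hs
        rw [if_neg (not_le.2 hs.2), if_neg hi]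
    exact Filter.Tendsto.congr' hev.symm tendsto_const_nhds
  -- left limits of the jump sums
  have hsum_ll : ∀ (S : Finset (Fin n)) (τ : ℝ),
      Tendsto (fun s : ℝ => ∑ i ∈ S, if t i ≤ s then a i else 0) (𝓝[<] τ)
        (𝓝 (∑ i ∈ S.filter (fun i => t i < τ), a i)) := by
    intro S τ
    have hev : (fun s : ℝ => ∑ i ∈ S, if t i ≤ s then a i else 0) =ᶠ[𝓝[<] τ]
        (fun _ => ∑ i ∈ S.filter (fun i => t i < τ), a i) := by
      have h1 : ∀ i ∈ S, ∀ᶠ s in 𝓝[<] τ,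
          (if t i ≤ s then a i else 0) = (if t i < τ then a i else 0) := by
        intro i _
        by_cases hi : t i < τ
        · filter_upwards [Ioo_mem_nhdsLT_of_mem
            (show τ ∈ Set.Ioc (t i) τ from ⟨hi, le_rfl⟩)] with s hs
          rw [if_pos hs.1.le, if_pos hi]
        · filter_upwards [self_mem_nhdsWithin] with s hs
          rw [if_neg (fun hc => hi (lt_of_le_of_lt hc hs)), if_neg hi]
      refine ((eventually_all_finset S).2 h1).mono fun s hs => ?_
      exact (Finset.sum_congr rfl hs).trans (Finset.sum_filter _ _).symm
    exact Filter.Tendsto.congr' hev.symm tendsto_const_nhds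
  subst hx hxk
  -- left limit formulas
  have hllx : ∀ τ : ℝ,
      Function.leftLim (fun s : ℝ => c s + ∑ i : Fin n, if t i ≤ s then a i else 0) τ
        = c τ + ∑ i ∈ Finset.univ.filter (fun i => t i < τ), a i := by
    intro τ
    refine leftLim_eq_of_tendsto ?_
    exact Tendsto.add ((hc_cont.tendsto τ).mono_left nhdsWithin_le_nhds)
      (hsum_ll Finset.univ τ)
  have hllxk : ∀ τ : ℝ,
      Function.leftLim (fun s : ℝ => ∑ i ∈ J, if t i ≤ s then a i else 0) τ
        = ∑ i ∈ J.filter (fun i => t i < τ), a i :=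
    fun τ => leftLim_eq_of_tendsto (hsum_ll J τ)
  -- splitting sums at τ
  have hkey : ∀ (S : Finset (Fin n)) (τ : ℝ),
      (∑ i ∈ S, if t i ≤ τ then a i else 0)
        = (∑ i ∈ S.filter (fun i => t i < τ), a i)
          + ∑ i ∈ S.filter (fun i => t i = τ), a i := by
    intro S τ
    rw [← Finset.sum_filter]
    have hsplit : S.filter (fun i => t i ≤ τ)
        = S.filter (fun i => t i < τ) ∪ S.filter (fun i => t i = τ) := by
      ext i
      simp only [Finset.mem_filter, Finset.mem_union]
      constructor
      · rintro ⟨hi, hle⟩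
        rcases lt_or_eq_of_le hle with h | h
        exacts [Or.inl ⟨hi, h⟩, Or.inr ⟨hi, h⟩]
      · rintro (⟨hi, h⟩ | ⟨hi, h⟩)
        exacts [⟨hi, h.le⟩, ⟨hi, le_of_eq h⟩]
    rw [hsplit, Finset.sum_union]
    refine Finset.disjoint_left.2 fun i hi hj => ?_
    have h1 := (Finset.mem_filter.1 hi).2
    have h2 := (Finset.mem_filter.1 hj).2
    rw [h2] at h1
    exact lt_irrefl τ h1
  apply M1Helper.m1_abstract
  · -- Monotone x
    intro s s' h
    exact add_le_add (hc_mono h) (hsum_mono Finset.univ h)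
  · exact hsum_mono J
  · intro τ
    exact (hc_cont.continuousWithinAt).add (hsum_rc Finset.univ τ)
  · exact fun τ => hsum_rc J τ
  · -- leftLim x 0 = 0
    rw [hllx 0]
    have he : Finset.univ.filter (fun i => t i < (0:ℝ)) = ∅ :=
      Finset.filter_eq_empty_iff.2 fun i _ => not_lt.2 (ht i).1
    rw [he, Finset.sum_empty, hc0, add_zero]
  · rw [hllxk 0]
    have he : J.filter (fun i => t i < (0:ℝ)) = ∅ :=
      Finset.filter_eq_empty_iff.2 fun i _ => not_lt.2 (ht i).1
    rw [he, Finset.sum_empty]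
  · -- leftLim xk ≤ leftLim x
    intro τ hτ
    rw [hllx τ, hllxk τ]
    have h1 : 0 ≤ c τ := hc0 ▸ hc_mono hτ.1
    have h2 : (∑ i ∈ J.filter (fun i => t i < τ), a i)
        ≤ ∑ i ∈ Finset.univ.filter (fun i => t i < τ), a i :=
      Finset.sum_le_sum_of_subset_of_nonneg
        (Finset.filter_subset_filter _ (Finset.subset_univ J)) fun i _ _ => haz i
    linarith
  · -- jump comparison
    intro τ hτ
    rw [hllx τ, hllxk τ]
    have e1 := hkey Finset.univ τ
    have e2 := hkey J τ
    have e3 : (∑ i ∈ J.filter (fun i => t i = τ), a i)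
        ≤ ∑ i ∈ Finset.univ.filter (fun i => t i = τ), a i :=
      Finset.sum_le_sum_of_subset_of_nonneg
        (Finset.filter_subset_filter _ (Finset.subset_univ J)) fun i _ _ => haz i
    beta_reduce
    linarith
  · -- distance bound
    intro τ hτ
    have e4 : (∑ i ∈ J, if t i ≤ τ then a i else 0)
        + ∑ i ∈ Jᶜ, (if t i ≤ τ then a i else 0)
        = ∑ i : Fin n, if t i ≤ τ then a i else 0 := Finset.sum_add_sum_compl J _
    have e5 : (∑ i ∈ Jᶜ, (if t i ≤ τ then a i else 0)) ≤ ∑ i ∈ Jᶜ, a i :=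
      Finset.sum_le_sum fun i _ => by split_ifs; exacts [le_rfl, haz i]
    have e6 : c τ ≤ c 1 := hc_mono hτ.2
    beta_reduce
    linarith
  · -- 0 ≤ η
    have h1 : (0:ℝ) ≤ ∑ i ∈ Jᶜ, a i := Finset.sum_nonneg fun i _ => haz i
    have h2 : c 0 ≤ c 1 := hc_mono zero_le_one
    linarith
end
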